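/- arXiv:1703.02088 — 8 statements merged into one kernel-verified Lean document; each statement's English description precedes it below -/
import Mathlib

section
/- Let X be a Poisson random variable with parameter λ > 0. Then for every real x with 0 < x ≤ λ^{1/2}, P(X < λ − x·λ^{1/2}) ≤ e^{−x²/2}. -/
open MeasureTheory ProbabilityTheory

lemma exp_neg_le_quad {t : ℝ} (h0 : 0 ≤ t) (h1 : t ≤ 1) :
    Real.exp (-t) ≤ 1 - t + t ^ 2 / 2 := by
  have habs : |(-t)| ≤ 1 := by rw [abs_neg, abs_of_nonneg h0]; exact h1
  have h := Real.exp_bound habs (n := 4) (by norm_num)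
  have h' := (abs_sub_le_iff.1 h).1
  have hsum : ∑ m ∈ Finset.range 4, (-t) ^ m / (Nat.factorial m)
      = 1 - t + t ^ 2 / 2 - t ^ 3 / 6 := by
    simp [Finset.sum_range_succ, Nat.factorial]
    ring
  rw [hsum, abs_neg, abs_of_nonneg h0] at h'
  have ht43 : t ^ 4 ≤ t ^ 3 := pow_le_pow_of_le_one h0 h1 (by norm_num)
  norm_num [Nat.factorial] at h'
  nlinarith [h']

/-- Poisson moderate-deviation lower-tail bound: for `0 < x ≤ √λ`,
`P(X < λ − x√λ) ≤ e^{−x²/2}`. -/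
theorem poisson_lower_md {Ω : Type*} [MeasurableSpace Ω]
    (μ : Measure Ω) [IsProbabilityMeasure μ]
    (X : Ω → ℕ) (hX : Measurable X) (lam : ℝ) (hlam : 0 < lam)
    (hpois : ∀ k : ℕ,
      μ {ω | X ω = k} = ENNReal.ofReal (Real.exp (-lam) * lam ^ k / (Nat.factorial k)))
    (x : ℝ) (hx0 : 0 < x) (hx1 : x ≤ Real.sqrt lam) :
    μ {ω | (X ω : ℝ) < lam - x * Real.sqrt lam} ≤ ENNReal.ofReal (Real.exp (-x ^ 2 / 2)) := by
  set s : ℝ := Real.sqrt lam with hs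
  have hs0 : 0 < s := Real.sqrt_pos.mpr hlam
  have hs2 : s ^ 2 = lam := Real.sq_sqrt hlam.le
  set θ : ℝ := x / s with hθdef
  have hθ0 : 0 < θ := div_pos hx0 hs0
  have hθ1 : θ ≤ 1 := (div_le_one hs0).mpr hx1
  have hθs : θ * s = x := div_mul_cancel₀ x hs0.ne'
  set a : ℝ := lam - x * s with ha
  -- the pmf and the Chernoff-weighted pmf
  set p : ℕ → ℝ := fun k => Real.exp (-lam) * lam ^ k / (Nat.factorial k) with hp
  set r : ℝ := lam * Real.exp (-θ) with hr
  have hr0 : 0 ≤ r := mul_nonneg hlam.le (Real.exp_pos _).le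
  set f : ℕ → ℝ := fun k => Real.exp (θ * a - lam) * r ^ k / (Nat.factorial k) with hf
  have hfk : ∀ k : ℕ, f k = Real.exp (θ * (a - k)) * p k := by
    intro k
    have e1 : θ * a - lam = θ * a + (-lam) := by ring
    have e2 : θ * (a - (k : ℝ)) = θ * a + (k : ℝ) * (-θ) := by ring
    simp only [hf, hp, hr, e1, e2, Real.exp_add, Real.exp_nat_mul, mul_pow]
    ring
  have hp_nonneg : ∀ k, 0 ≤ p k :=
    fun k => div_nonneg (mul_nonneg (Real.exp_pos _).le (pow_nonneg hlam.le k))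
      (Nat.cast_nonneg _)
  have hf_nonneg : ∀ k, 0 ≤ f k :=
    fun k => div_nonneg (mul_nonneg (Real.exp_pos _).le (pow_nonneg hr0 k))
      (Nat.cast_nonneg _)
  -- decompose the event
  have hset : {ω | (X ω : ℝ) < a} = ⋃ (k : {n : ℕ // (n : ℝ) < a}), {ω | X ω = (k : ℕ)} := by
    ext ω
    simp only [Set.mem_setOf_eq, Set.mem_iUnion]
    constructor
    · intro h; exact ⟨⟨X ω, h⟩, rfl⟩
    · rintro ⟨⟨k, hk⟩, h⟩; rw [h]; exact hk
  have hmeas : μ {ω | (X ω : ℝ) < a}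
      = ∑' (k : {n : ℕ // (n : ℝ) < a}), ENNReal.ofReal (p (k : ℕ)) := by
    rw [hset, measure_iUnion]
    · exact tsum_congr fun k => hpois k
    · intro i j hij
      have : (i : ℕ) ≠ (j : ℕ) := fun h => hij (Subtype.coe_injective h)
      simp only [Set.disjoint_left, Set.mem_setOf_eq]
      intro ω h1 h2
      exact this (h1 ▸ h2)
    · intro k
      exact hX (measurableSet_singleton (k : ℕ))
  -- termwise bound on the index set
  have hterm : ∀ k : {n : ℕ // (n : ℝ) < a}, ENNReal.ofReal (p (k : ℕ))
      ≤ ENNReal.ofReal (f (k : ℕ)) := by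
    rintro ⟨k, hk⟩
    apply ENNReal.ofReal_le_ofReal
    rw [hfk]
    have h1 : (1 : ℝ) ≤ Real.exp (θ * (a - k)) := by
      apply Real.one_le_exp
      have : (0 : ℝ) ≤ a - k := by linarith
      positivity
    exact le_mul_of_one_le_left (hp_nonneg k) h1
  -- sum of f
  have hsumf : HasSum f (Real.exp (θ * a - lam) * Real.exp r) := by
    have h1 := poissonPMFRealSum ⟨r, hr0⟩
    change HasSum (fun n : ℕ => Real.exp (-r) * r ^ n / (Nat.factorial n)) 1 at h1
    have h2 : HasSum (fun n : ℕ => r ^ n / (Nat.factorial n)) (Real.exp r) := by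
      have := h1.mul_left (Real.exp r)
      simpa [← Real.exp_add, mul_div_assoc, ← mul_assoc] using this
    simpa [hf, mul_div_assoc] using h2.mul_left (Real.exp (θ * a - lam))
  have hsummf : Summable f := hsumf.summable
  -- chain of inequalities
  calc μ {ω | (X ω : ℝ) < a}
      = ∑' (k : {n : ℕ // (n : ℝ) < a}), ENNReal.ofReal (p (k : ℕ)) := hmeas
    _ ≤ ∑' (k : {n : ℕ // (n : ℝ) < a}), ENNReal.ofReal (f (k : ℕ)) :=
        ENNReal.tsum_le_tsum hterm
    _ ≤ ∑' (k : ℕ), ENNReal.ofReal (f k) :=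
        ENNReal.tsum_comp_le_tsum_of_injective Subtype.coe_injective _
    _ = ENNReal.ofReal (∑' k, f k) :=
        (ENNReal.ofReal_tsum_of_nonneg hf_nonneg hsummf).symm
    _ = ENNReal.ofReal (Real.exp (θ * a - lam) * Real.exp r) := by rw [hsumf.tsum_eq]
    _ ≤ ENNReal.ofReal (Real.exp (-x ^ 2 / 2)) := by
        apply ENNReal.ofReal_le_ofReal
        rw [← Real.exp_add]
        apply Real.exp_le_exp.mpr
        have hquad : Real.exp (-θ) ≤ 1 - θ + θ ^ 2 / 2 := exp_neg_le_quad hθ0.le hθ1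
        have hx2 : x ^ 2 = θ ^ 2 * lam := by rw [← hθs, ← hs2]; ring
        have hxs : x * s = θ * lam := by rw [← hθs, ← hs2]; ring
        have : r ≤ lam * (1 - θ + θ ^ 2 / 2) :=
          mul_le_mul_of_nonneg_left hquad hlam.le
        rw [ha]
        nlinarith [this]
end

section
/- Let ξ be a Poisson random variable with parameter λ > 0 and let α ∈ (0, 1/2]. Then E[(1 + ξ)^{−1}] ≤ (1+λ)^{−1} + (1+λ)^{−3/2+α} + e^{−λ^{2α}/8}. -/
open MeasureTheory ProbabilityTheory

private lemma poisson_tsum_aux (lam : ℝ) (hlam : 0 < lam) :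
    ∑' k : ℕ, (Real.exp (-lam) * lam ^ k / (Nat.factorial k)) * ((1:ℝ) + k)⁻¹
      = (1 - Real.exp (-lam)) / lam := by
  have hsum : Summable (fun k : ℕ => lam ^ k / (Nat.factorial k) : ℕ → ℝ) :=
    Real.summable_pow_div_factorial lam
  have hexp : Real.exp lam = ∑' n : ℕ, lam ^ n / (Nat.factorial n) := by
    rw [Real.exp_eq_exp_ℝ, NormedSpace.exp_eq_tsum_div]
  have key : ∀ k : ℕ, (Real.exp (-lam) * lam ^ k / (Nat.factorial k)) * ((1:ℝ) + k)⁻¹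
      = (Real.exp (-lam) / lam) * (lam ^ (k+1) / (Nat.factorial (k+1))) := by
    intro k
    have : ((Nat.factorial (k+1) : ℝ)) = (k+1) * Nat.factorial k := by
      push_cast [Nat.factorial_succ]; ring
    rw [this]
    have h1 : ((1:ℝ) + k) ≠ 0 := by positivity
    have h2 : (Nat.factorial k : ℝ) ≠ 0 := by positivity
    field_simp
    ring
  rw [tsum_congr key, tsum_mul_left]
  have hshift : ∑' k : ℕ, lam ^ (k+1) / (Nat.factorial (k+1)) = Real.exp lam - 1 := by
    have := (Summable.tsum_eq_zero_add hsum)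
    simp only [pow_zero, Nat.factorial_zero, Nat.cast_one, div_one] at this
    rw [hexp]; linarith [this]
  rw [hshift, Real.exp_neg]
  field_simp

/-- Reciprocal moment bound for a Poisson(λ) random variable: for `α ∈ (0,1/2]`,
`E[(1+ξ)⁻¹] ≤ (1+λ)⁻¹ + (1+λ)^{−3/2+α} + e^{−λ^{2α}/8}`. -/
theorem poisson_recip_moment {Ω : Type*} [MeasurableSpace Ω]
    (μ : Measure Ω) [IsProbabilityMeasure μ]
    (ξ : Ω → ℕ) (hξ : Measurable ξ) (lam : ℝ) (hlam : 0 < lam)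
    (hpois : ∀ k : ℕ,
      μ {ω | ξ ω = k} = ENNReal.ofReal (Real.exp (-lam) * lam ^ k / (Nat.factorial k)))
    (α : ℝ) (hα0 : 0 < α) (hα1 : α ≤ 1 / 2) :
    ∫ ω, ((1 : ℝ) + (ξ ω : ℝ))⁻¹ ∂μ ≤
      (1 + lam)⁻¹ + (1 + lam) ^ (-(3:ℝ) / 2 + α) + Real.exp (-lam ^ (2 * α) / 8) := by
  -- the pushforward measure
  set ν : Measure ℕ := μ.map ξ with hν
  have hinst : IsProbabilityMeasure ν := Measure.isProbabilityMeasure_map hξ.aemeasurable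
  have hνk : ∀ k : ℕ, ν {k} = ENNReal.ofReal (Real.exp (-lam) * lam ^ k / (Nat.factorial k)) := by
    intro k
    rw [hν, Measure.map_apply hξ (measurableSet_singleton k)]
    exact hpois k
  set g : ℕ → ℝ := fun k => ((1:ℝ) + k)⁻¹ with hg
  have hg_meas : Measurable g := measurable_of_countable g
  have hg_bound : ∀ k, ‖g k‖ ≤ 1 := by
    intro k
    rw [hg, Real.norm_eq_abs, abs_of_pos (by positivity)]
    rw [inv_le_one_iff₀]
    right
    have : (0:ℝ) ≤ (k:ℝ) := Nat.cast_nonneg k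
    linarith
  have hg_int : Integrable g ν := by
    refine Integrable.mono' (integrable_const 1) hg_meas.aestronglyMeasurable ?_
    exact Filter.Eventually.of_forall hg_bound
  -- integral as tsum
  have hmap : ∫ ω, ((1 : ℝ) + (ξ ω : ℝ))⁻¹ ∂μ = ∫ k, g k ∂ν := by
    rw [hν, integral_map hξ.aemeasurable hg_meas.aestronglyMeasurable]
  have hval : ∫ ω, ((1 : ℝ) + (ξ ω : ℝ))⁻¹ ∂μ = (1 - Real.exp (-lam)) / lam := by
    rw [hmap, integral_countable' hg_int]
    rw [← poisson_tsum_aux lam hlam]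
    congr 1
    funext k
    rw [measureReal_def, hνk k, ENNReal.toReal_ofReal (by positivity), smul_eq_mul]
  rw [hval]
  have hexp_pos : 0 < Real.exp (-lam) := Real.exp_pos _
  have h1lam : (0:ℝ) < 1 + lam := by linarith
  have hrpow_nonneg : (0:ℝ) ≤ (1 + lam) ^ (-(3:ℝ) / 2 + α) := Real.rpow_nonneg (le_of_lt h1lam) _
  rcases le_or_gt lam 2 with hcase | hcase
  · -- small λ: LHS ≤ 1 ≤ 1/(1+λ) + exp term
    have hLHS : (1 - Real.exp (-lam)) / lam ≤ 1 := by
      rw [div_le_one hlam]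
      have := Real.add_one_le_exp (-lam)
      linarith
    have hpow : lam ^ (2 * α) ≤ 2 := by
      calc lam ^ (2 * α) ≤ (2:ℝ) ^ (2 * α) :=
            Real.rpow_le_rpow (le_of_lt hlam) hcase (by linarith)
        _ ≤ (2:ℝ) ^ (1:ℝ) := Real.rpow_le_rpow_of_exponent_le (by norm_num) (by linarith)
        _ = 2 := Real.rpow_one 2
    have hexp_lb : (3:ℝ)/4 ≤ Real.exp (-lam ^ (2 * α) / 8) := by
      have := Real.add_one_le_exp (-lam ^ (2 * α) / 8)
      linarith
    have hinv_lb : (1:ℝ)/3 ≤ (1 + lam)⁻¹ := by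
      rw [show (1:ℝ)/3 = (3:ℝ)⁻¹ by norm_num]
      apply inv_anti₀ h1lam
      linarith
    linarith
  · -- large λ: LHS ≤ 1/λ = 1/(1+λ) + 1/(λ(1+λ)) and 1/(λ(1+λ)) ≤ (1+λ)^{-3/2+α}
    have hLHS : (1 - Real.exp (-lam)) / lam ≤ 1 / lam := by
      gcongr
      linarith
    have hsq : Real.sqrt (1 + lam) ≤ lam := by
      have h := Real.sqrt_le_sqrt (show 1 + lam ≤ lam ^ 2 by nlinarith)
      rwa [Real.sqrt_sq hlam.le] at h
    have h32 : (1 + lam) ^ ((3:ℝ)/2) ≤ lam * (1 + lam) := by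
      have he : (1 + lam) ^ ((3:ℝ)/2) = (1 + lam) * (1 + lam) ^ ((1:ℝ)/2) := by
        rw [show (3:ℝ)/2 = 1 + 1/2 by norm_num, Real.rpow_add h1lam, Real.rpow_one]
      rw [he, ← Real.sqrt_eq_rpow]
      nlinarith [Real.sqrt_nonneg (1 + lam)]
    have hmono : (1 + lam) ^ (-(3:ℝ)/2) ≤ (1 + lam) ^ (-(3:ℝ)/2 + α) :=
      Real.rpow_le_rpow_of_exponent_le (by linarith) (by linarith)
    have hinv32 : (lam * (1 + lam))⁻¹ ≤ (1 + lam) ^ (-(3:ℝ)/2) := by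
      rw [show -(3:ℝ)/2 = -((3:ℝ)/2) by ring, Real.rpow_neg h1lam.le]
      exact inv_anti₀ (Real.rpow_pos_of_pos h1lam _) h32
    have hid : (1:ℝ)/lam = (1 + lam)⁻¹ + (lam * (1 + lam))⁻¹ := by
      field_simp
      ring
    have hexp0 : 0 ≤ Real.exp (-lam ^ (2 * α) / 8) := (Real.exp_pos _).le
    linarith
end

section
/- Let r ∈ (0, 1], α ∈ (0, 1/2), and t ≥ 0. Then ∫₀^t E[(1 + ξ_s)^{−1}] ds ≤ (1/r)·log(1 + r·t) + ∫₀^∞ ((1 + r·s)^{−3/2+α} + e^{−(r·s)^{2α}/8}) ds, where for each s > 0, ξ_s is a Poisson random variable with parameter r·s (and ξ_0 = 0). -/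
open MeasureTheory Real Set Filter Asymptotics

lemma exp_shift_sum (l : ℝ) : ∑' k : ℕ, l ^ (k+1) / (Nat.factorial (k+1)) = Real.exp l - 1 := by
  have hsum : Summable (fun n : ℕ => l ^ n / (Nat.factorial n)) := Real.summable_pow_div_factorial l
  have hexp : ∑' n : ℕ, l ^ n / (Nat.factorial n) = Real.exp l := by
    rw [Real.exp_eq_exp_ℝ]
    exact (NormedSpace.expSeries_div_hasSum_exp l).tsum_eq
  have := Summable.tsum_eq_zero_add hsum
  rw [hexp] at this
  simp only [pow_zero, Nat.factorial_zero, Nat.cast_one, div_one] at this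
  linarith

lemma poisson_inv_expectation {Ω : Type*} [MeasurableSpace Ω]
    (μ : Measure Ω) [IsProbabilityMeasure μ] (X : Ω → ℕ) (hX : Measurable X)
    (l : ℝ) (hl : 0 < l)
    (hp : ∀ k : ℕ, μ {ω | X ω = k} =
      ENNReal.ofReal (Real.exp (-l) * l ^ k / (Nat.factorial k))) :
    ∫ ω, ((1:ℝ) + (X ω : ℝ))⁻¹ ∂μ = (1 - Real.exp (-l)) / l := by
  have hXae : AEMeasurable X μ := hX.aemeasurable
  set ν : Measure ℕ := μ.map X with hν
  have : IsProbabilityMeasure ν := Measure.isProbabilityMeasure_map hXae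
  have hmble : AEStronglyMeasurable (fun n : ℕ => ((1:ℝ) + (n:ℝ))⁻¹) ν :=
    (measurable_from_top (f := fun n : ℕ => ((1:ℝ) + (n:ℝ))⁻¹)).aestronglyMeasurable
  have hint : Integrable (fun n : ℕ => ((1:ℝ) + (n:ℝ))⁻¹) ν := by
    refine (integrable_const (1:ℝ)).mono' hmble ?_
    filter_upwards with n
    rw [Real.norm_eq_abs, abs_of_nonneg (by positivity)]
    rw [inv_le_one_iff₀]
    right; push_cast; linarith [Nat.cast_nonneg (α := ℝ) n]
  have hmap : ∫ ω, ((1:ℝ) + (X ω : ℝ))⁻¹ ∂μ = ∫ n, ((1:ℝ) + (n:ℝ))⁻¹ ∂ν := by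
    rw [hν, integral_map hXae hmble]
  rw [hmap, integral_countable' hint]
  have hpt : ∀ k : ℕ, (ν {k}).toReal • ((1:ℝ) + (k:ℝ))⁻¹
      = (Real.exp (-l) / l) * (l ^ (k+1) / (Nat.factorial (k+1))) := by
    intro k
    have : ν {k} = μ {ω | X ω = k} := by
      rw [hν, Measure.map_apply hX (measurableSet_singleton k)]
      congr 1
    rw [this, hp k, ENNReal.toReal_ofReal (by positivity), smul_eq_mul]
    rw [Nat.factorial_succ]
    have hk : (0:ℝ) < 1 + (k:ℝ) := by positivity
    have hfk : (0:ℝ) < (Nat.factorial k : ℝ) := by positivity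
    field_simp
    push_cast; ring
  rw [tsum_congr (fun k => (show ν.real {k} • ((1:ℝ) + (k:ℝ))⁻¹ = (Real.exp (-l) / l) * (l ^ (k+1) / (Nat.factorial (k+1))) from hpt k)), tsum_mul_left, exp_shift_sum]
  rw [Real.exp_neg]
  have h := Real.exp_pos l
  field_simp

lemma pointwise_bound (α l : ℝ) (hα0 : 0 < α) (hα1 : α < 1/2) (hl : 0 < l) :
    (1 - Real.exp (-l)) / l ≤
      (1 + l)⁻¹ + ((1 + l) ^ (-(3:ℝ)/2 + α) + Real.exp (-l ^ (2*α) / 8)) := by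
  have h1l : (0:ℝ) < 1 + l := by linarith
  have hrpow_nonneg : (0:ℝ) ≤ (1 + l) ^ (-(3:ℝ)/2 + α) := by positivity
  rcases le_total l 2 with h2 | h2
  · -- small l case
    have hA : (1 - Real.exp (-l)) / l ≤ 1 := by
      rw [div_le_one hl]
      have := Real.add_one_le_exp (-l)
      linarith
    have hB : (1/3 : ℝ) ≤ (1 + l)⁻¹ := by
      rw [show (1/3:ℝ) = (3:ℝ)⁻¹ by norm_num]
      exact inv_anti₀ h1l (by linarith)
    have hC : l ^ (2*α) ≤ 2 := by
      rcases le_total l 1 with h1 | h1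
      · exact (Real.rpow_le_one hl.le h1 (by linarith)).trans (by norm_num)
      · calc l ^ (2*α) ≤ l ^ (1:ℝ) :=
              Real.rpow_le_rpow_of_exponent_le h1 (by linarith)
          _ = l := Real.rpow_one l
          _ ≤ 2 := h2
    have hD : (3/4 : ℝ) ≤ Real.exp (-l ^ (2*α) / 8) := by
      have : Real.exp (-(1/4 : ℝ)) ≤ Real.exp (-l ^ (2*α) / 8) :=
        Real.exp_le_exp.mpr (by linarith)
      have h4 := Real.add_one_le_exp (-(1/4:ℝ))
      linarith
    linarith
  · -- large l case
    have hexp_nonneg : (0:ℝ) ≤ Real.exp (-l ^ (2*α) / 8) := (Real.exp_pos _).le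
    have hsqrt : (1 + l) ^ ((1:ℝ)/2) ≤ l := by
      rw [← Real.sqrt_eq_rpow]
      calc Real.sqrt (1 + l) ≤ Real.sqrt (l^2) := Real.sqrt_le_sqrt (by nlinarith)
        _ = l := Real.sqrt_sq (by linarith)
    have hsqrt_pos : (0:ℝ) < (1 + l) ^ ((1:ℝ)/2) := Real.rpow_pos_of_pos h1l _
    have hkey : (l * (1 + l))⁻¹ ≤ (1 + l) ^ (-(3:ℝ)/2 + α) := by
      have e1 : (1 + l) ^ (-(3:ℝ)/2) ≤ (1 + l) ^ (-(3:ℝ)/2 + α) :=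
        Real.rpow_le_rpow_of_exponent_le (by linarith) (by linarith)
      have e2 : (1 + l) ^ (-(3:ℝ)/2) = ((1 + l) * (1 + l) ^ ((1:ℝ)/2))⁻¹ := by
      
        rw [show (-(3:ℝ)/2) = -(1 + 1/2) by norm_num, Real.rpow_neg h1l.le,
          Real.rpow_add h1l, Real.rpow_one]
      have e3 : (l * (1 + l))⁻¹ ≤ ((1 + l) * (1 + l) ^ ((1:ℝ)/2))⁻¹ := by
        apply inv_anti₀ (by positivity)
        calc (1 + l) * (1 + l) ^ ((1:ℝ)/2) ≤ (1 + l) * l := by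
              exact mul_le_mul_of_nonneg_left hsqrt h1l.le
          _ = l * (1 + l) := mul_comm _ _
      rw [← e2] at e3
      exact e3.trans e1
    have hfinal : (1 - Real.exp (-l)) / l ≤ 1 / l := by
      have := Real.exp_pos (-l)
      gcongr
      linarith
    have hsplit : 1 / l = (1 + l)⁻¹ + (l * (1 + l))⁻¹ := by
      field_simp
      ring
    linarith

lemma tail_integrable (r α : ℝ) (hr0 : 0 < r) (hα0 : 0 < α) (hα1 : α < 1/2) :
    IntegrableOn
      (fun s : ℝ => (1 + r * s) ^ (-(3:ℝ)/2 + α) + Real.exp (-(r * s) ^ (2*α) / 8))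
      (Ioi 0) := by
  set p : ℝ := -(3:ℝ)/2 + α with hp
  have hp1 : p < -1 := by rw [hp]; linarith
  have hβ : (0:ℝ) < 2*α := by linarith
  have hbase : ContinuousOn (fun s : ℝ => 1 + r * s) (Ici 0) :=
    (continuous_const.add (continuous_const.mul continuous_id)).continuousOn
  have hI1 : IntegrableOn (fun s : ℝ => (1 + r * s) ^ p) (Ici 0) := by
    have hcont : ContinuousOn (fun s : ℝ => (1 + r * s) ^ p) (Ici 0) := by
      apply hbase.rpow_const
      intro x hx
      left
      have : (0:ℝ) < 1 + r * x := by nlinarith [mem_Ici.mp hx]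
      exact this.ne'
    refine (hcont.locallyIntegrableOn measurableSet_Ici).integrableOn_of_isBigO_atTop
      (g := fun s : ℝ => s ^ p) ?_ ?_
    · rw [isBigO_iff]
      refine ⟨r ^ p, ?_⟩
      filter_upwards [eventually_gt_atTop (0:ℝ)] with s hs
      have h1 : (0:ℝ) < r * s := by positivity
      have h2 : (1 + r * s) ^ p ≤ (r * s) ^ p :=
        Real.rpow_le_rpow_of_nonpos h1 (by linarith) (by linarith)
      rw [Real.norm_eq_abs, Real.norm_eq_abs, abs_of_nonneg (by positivity),
        abs_of_nonneg (by positivity)]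
      calc (1 + r * s) ^ p ≤ (r * s) ^ p := h2
        _ = r ^ p * s ^ p := Real.mul_rpow hr0.le hs.le
    · exact ⟨Ioi 1, Ioi_mem_atTop 1, integrableOn_Ioi_rpow_of_lt hp1 one_pos⟩
  have hI2 : IntegrableOn (fun s : ℝ => Real.exp (-(r * s) ^ (2*α) / 8)) (Ici 0) := by
    have hcont : ContinuousOn (fun s : ℝ => Real.exp (-(r * s) ^ (2*α) / 8)) (Ici 0) := by
      apply Real.continuous_exp.comp_continuousOn
      apply ContinuousOn.div_const
      apply ContinuousOn.neg
      apply ContinuousOn.rpow_const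
        ((continuous_const.mul continuous_id).continuousOn)
      intro x _
      right; exact hβ.le
    refine (hcont.locallyIntegrableOn measurableSet_Ici).integrableOn_of_isBigO_atTop
      (g := fun s : ℝ => s ^ (-2:ℝ)) ?_ ?_
    · apply IsLittleO.isBigO
      rw [isLittleO_iff_tendsto']
      · -- tendsto of ratio to 0
        set b : ℝ := r ^ (2*α) / 8 with hb
        have hbpos : 0 < b := by rw [hb]; positivity
        have h0 : Tendsto (fun x : ℝ => x ^ ((2:ℝ)/(2*α)) * Real.exp (-b * x)) atTop (nhds 0) :=
          tendsto_rpow_mul_exp_neg_mul_atTop_nhds_zero _ b hbpos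
        have h1 : Tendsto (fun s : ℝ => s ^ (2*α)) atTop atTop := tendsto_rpow_atTop hβ
        have h2 := h0.comp h1
        apply h2.congr'
        filter_upwards [eventually_gt_atTop (0:ℝ)] with s hs
        have e1 : ((s ^ (2*α)) ^ ((2:ℝ)/(2*α))) = s ^ (2:ℝ) := by
          rw [← Real.rpow_mul hs.le]
          congr 1
          field_simp
        have e2 : -(b * s ^ (2*α)) = -(r * s) ^ (2*α) / 8 := by
          rw [Real.mul_rpow hr0.le hs.le, hb]; ring
        simp only [Function.comp]
        rw [e1, neg_mul, e2]
        rw [Real.rpow_neg hs.le]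
        field_simp
      · filter_upwards [eventually_gt_atTop (0:ℝ)] with s hs h
        exact absurd h (by positivity)
    · exact ⟨Ioi 1, Ioi_mem_atTop 1, integrableOn_Ioi_rpow_of_lt (by norm_num) one_pos⟩
  have hsum : IntegrableOn
      (fun s : ℝ => (1 + r * s) ^ p + Real.exp (-(r * s) ^ (2*α) / 8)) (Ici 0) :=
    hI1.add hI2
  exact hsum.mono_set Ioi_subset_Ici_self

open MeasureTheory ProbabilityTheory

/-- For a family `ξ_s` of Poisson(r·s) random variables (with `ξ_0 = 0`),
`∫₀^t E[(1+ξ_s)⁻¹] ds ≤ (1/r)·log(1+rt) + ∫₀^∞ ((1+rs)^{−3/2+α} + e^{−(rs)^{2α}/8}) ds`. -/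
theorem growth_factor_bound {Ω : Type*} [MeasurableSpace Ω]
    (μ : Measure Ω) [IsProbabilityMeasure μ]
    (r α t : ℝ) (hr0 : 0 < r) (hr1 : r ≤ 1) (hα0 : 0 < α) (hα1 : α < 1 / 2) (ht : 0 ≤ t)
    (ξ : ℝ → Ω → ℕ) (hmeas : ∀ s, Measurable (ξ s)) (hξ0 : ∀ ω, ξ 0 ω = 0)
    (hpois : ∀ s : ℝ, 0 < s → ∀ k : ℕ,
      μ {ω | ξ s ω = k} =
        ENNReal.ofReal (Real.exp (-(r * s)) * (r * s) ^ k / (Nat.factorial k))) :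
    ∫ s in (0:ℝ)..t, (∫ ω, ((1 : ℝ) + (ξ s ω : ℝ))⁻¹ ∂μ) ≤
      (1 / r) * Real.log (1 + r * t) +
      ∫ s in Set.Ioi (0:ℝ),
        ((1 + r * s) ^ (-(3:ℝ) / 2 + α) + Real.exp (-(r * s) ^ (2 * α) / 8)) := by
  set F : ℝ → ℝ := fun s => if s = 0 then 1 else (1 - Real.exp (-(r * s))) / (r * s) with hFdef
  set G1 : ℝ → ℝ := fun s => (1 + r * s)⁻¹ with hG1def
  set G2 : ℝ → ℝ := fun s =>
    (1 + r * s) ^ (-(3:ℝ)/2 + α) + Real.exp (-(r * s) ^ (2 * α) / 8) with hG2def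
  have huIcc : Set.uIcc (0:ℝ) t = Set.Icc 0 t := Set.uIcc_of_le ht
  -- replace the inner integral by F
  have hF : Set.EqOn (fun s => ∫ ω, ((1 : ℝ) + (ξ s ω : ℝ))⁻¹ ∂μ) F (Set.uIcc 0 t) := by
    intro s hs
    rw [huIcc] at hs
    by_cases h0 : s = 0
    · subst h0
      simp only [hFdef, if_pos rfl]
      have : ∀ ω, ((1 : ℝ) + (ξ 0 ω : ℝ))⁻¹ = 1 := by
        intro ω; rw [hξ0 ω]; norm_num
      simp only [this]
      simp
    · have hspos : 0 < s := lt_of_le_of_ne hs.1 (Ne.symm h0)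
      have hl : 0 < r * s := by positivity
      simp only [hFdef, if_neg h0]
      exact poisson_inv_expectation μ (ξ s) (hmeas s) (r * s) hl (hpois s hspos)
  rw [intervalIntegral.integral_congr hF]
  -- pointwise bound F ≤ G1 + G2 on [0, t]
  have hFbound : ∀ s ∈ Set.Icc (0:ℝ) t, F s ≤ G1 s + G2 s := by
    intro s hs
    by_cases h0 : s = 0
    · subst h0
      simp only [hFdef, hG1def, hG2def, if_pos rfl, mul_zero]
      have h1 : ((0:ℝ)) ^ (2 * α) = 0 := Real.zero_rpow (by positivity : (0:ℝ) < 2*α).ne'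
      rw [show (-(0:ℝ) ^ (2*α)) = 0 by rw [h1]; ring]
      norm_num
    · have hspos : 0 < s := lt_of_le_of_ne hs.1 (Ne.symm h0)
      have hl : 0 < r * s := by positivity
      simp only [hFdef, hG1def, hG2def, if_neg h0]
      have := pointwise_bound α (r * s) hα0 (by linarith) hl
      convert this using 3
  -- integrability of F on [0, t]
  have hFint : IntervalIntegrable F volume 0 t := by
    rw [intervalIntegrable_iff, Set.uIoc_of_le ht]
    apply Measure.integrableOn_of_bounded (M := 1) measure_Ioc_lt_top.ne
    · apply Measurable.aestronglyMeasurable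
      apply Measurable.ite (measurableSet_eq)
      · exact measurable_const
      · fun_prop
    · rw [ae_restrict_iff' measurableSet_Ioc]
      filter_upwards with s hs
      have h0 : s ≠ 0 := (hs.1).ne'
      have hl : 0 < r * s := by have := hs.1; positivity
      simp only [hFdef, if_neg h0]
      rw [Real.norm_eq_abs]
      have hnum0 : 0 ≤ 1 - Real.exp (-(r * s)) := by
        have : Real.exp (-(r * s)) ≤ 1 := Real.exp_le_one_iff.mpr (by linarith)
        linarith
      rw [abs_of_nonneg (by positivity)]
      rw [div_le_one hl]
      have := Real.add_one_le_exp (-(r * s))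
      linarith
  -- integrability of G1 and G2 on [0, t]
  have hG1int : IntervalIntegrable G1 volume 0 t := by
    apply ContinuousOn.intervalIntegrable
    rw [huIcc]
    apply ContinuousOn.inv₀
      ((continuous_const.add (continuous_const.mul continuous_id)).continuousOn)
    intro x hx
    have := hx.1
    show 1 + r * x ≠ 0
    nlinarith
  have hG2Ioi : IntegrableOn G2 (Set.Ioi 0) := tail_integrable r α hr0 hα0 hα1
  have hG2int : IntervalIntegrable G2 volume 0 t := by
    rw [intervalIntegrable_iff, Set.uIoc_of_le ht]
    exact hG2Ioi.mono_set Set.Ioc_subset_Ioi_self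
  -- main comparison
  have step1 : ∫ s in (0:ℝ)..t, F s ≤ ∫ s in (0:ℝ)..t, (G1 s + G2 s) :=
    intervalIntegral.integral_mono_on ht hFint (hG1int.add hG2int) hFbound
  have step2 : ∫ s in (0:ℝ)..t, (G1 s + G2 s)
      = (∫ s in (0:ℝ)..t, G1 s) + ∫ s in (0:ℝ)..t, G2 s :=
    intervalIntegral.integral_add hG1int hG2int
  -- log integral
  have step3 : ∫ s in (0:ℝ)..t, G1 s = (1 / r) * Real.log (1 + r * t) := by
    have hderiv : ∀ s ∈ Set.uIcc (0:ℝ) t,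
        HasDerivAt (fun u => (1 / r) * Real.log (1 + r * u)) (G1 s) s := by
      intro s hs
      rw [huIcc] at hs
      have hpos : 0 < 1 + r * s := by nlinarith [hs.1]
      have h1 : HasDerivAt (fun u : ℝ => 1 + r * u) r s := by
        simpa using ((hasDerivAt_id s).const_mul r).const_add 1
      have h2 := (Real.hasDerivAt_log hpos.ne').comp s h1
      have h3 := h2.const_mul (1 / r)
      convert h3 using 1
      show (1 + r * s)⁻¹ = _
      field_simp
      all_goals rfl
    rw [intervalIntegral.integral_eq_sub_of_hasDerivAt hderiv hG1int]
    simp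
  -- tail integral comparison
  have step4 : ∫ s in (0:ℝ)..t, G2 s ≤ ∫ s in Set.Ioi (0:ℝ), G2 s := by
    rw [intervalIntegral.integral_of_le ht]
    apply setIntegral_mono_set hG2Ioi
    · filter_upwards [ae_restrict_mem measurableSet_Ioi] with s hs
      have hs0 : (0:ℝ) < s := hs
      simp only [hG2def, Pi.zero_apply]
      have : (0:ℝ) < 1 + r * s := by positivity
      positivity
    · exact Set.Ioc_subset_Ioi_self.eventuallyLE
  calc ∫ s in (0:ℝ)..t, F s ≤ (∫ s in (0:ℝ)..t, G1 s) + ∫ s in (0:ℝ)..t, G2 s := by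
        rw [← step2]; exact step1
    _ ≤ (1 / r) * Real.log (1 + r * t) + ∫ s in Set.Ioi (0:ℝ), G2 s := by
        rw [step3]; linarith
    _ = _ := by rw [hG2def]
end

section
/- Let a ∈ ℝ, β > 0, c > 0, and x > 0 satisfy 1 + a − β ≥ 0 and c·β − (1 + a − β)·x^{−β} > 0. Then ∫ₓ^∞ t^a e^{−c t^β} dt ≤ (c·β − (1 + a − β)·x^{−β})^{−1} · x^{1+a−β} · e^{−c x^β}. -/
open MeasureTheory

/-- Tail estimate for integrals `∫ₓ^∞ t^a e^{−ct^β} dt`: if `1 + a − β ≥ 0` and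
`cβ − (1+a−β)x^{−β} > 0`, then
`∫ₓ^∞ t^a e^{−ct^β} dt ≤ (cβ − (1+a−β)x^{−β})⁻¹ x^{1+a−β} e^{−cx^β}`. -/
theorem exp_tail_integral_bound (a β c x : ℝ) (hβ : 0 < β) (hc : 0 < c) (hx : 0 < x)
    (h1 : 0 ≤ 1 + a - β) (h2 : 0 < c * β - (1 + a - β) * x ^ (-β)) :
    ∫ t in Set.Ioi x, t ^ a * Real.exp (-c * t ^ β) ≤
      (c * β - (1 + a - β) * x ^ (-β))⁻¹ * x ^ (1 + a - β) * Real.exp (-c * x ^ β) := by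
  set p : ℝ := 1 + a - β with hp
  set K : ℝ := c * β - p * x ^ (-β) with hK
  set g : ℝ → ℝ := fun t => -(t ^ p * Real.exp (-c * t ^ β)) with hg
  set g' : ℝ → ℝ := fun t => (c * β - p * t ^ (-β)) * (t ^ a * Real.exp (-c * t ^ β))
    with hg'
  -- derivative computation
  have hderiv : ∀ t ∈ Set.Ici x, HasDerivAt g (g' t) t := by
    intro t ht
    have ht0 : 0 < t := lt_of_lt_of_le hx ht
    have hd1 : HasDerivAt (fun t : ℝ => t ^ p) (p * t ^ (p - 1)) t :=
      Real.hasDerivAt_rpow_const (Or.inl ht0.ne')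
    have hd2 : HasDerivAt (fun t : ℝ => Real.exp (-c * t ^ β))
        (Real.exp (-c * t ^ β) * (-c * (β * t ^ (β - 1)))) t := by
      have hb : HasDerivAt (fun t : ℝ => -c * t ^ β) (-c * (β * t ^ (β - 1))) t :=
        (Real.hasDerivAt_rpow_const (Or.inl ht0.ne')).const_mul (-c)
      simpa [Function.comp_def] using (Real.hasDerivAt_exp _).comp t hb
    have hd3 := (hd1.mul hd2).neg
    refine hd3.congr_deriv (Eq.symm ?_)
    have e1 : t ^ (p - 1) = t ^ a * t ^ (-β) := by
      rw [← Real.rpow_add ht0, hp]; ring_nf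
    have e2 : t ^ p * t ^ (β - 1) = t ^ a := by
      rw [← Real.rpow_add ht0, hp]; ring_nf
    show (c * β - p * t ^ (-β)) * (t ^ a * Real.exp (-c * t ^ β)) = _
    rw [e1]
    linear_combination (-(c * β * Real.exp (-c * t ^ β))) * e2
  -- lower bound K ≤ coefficient, and nonnegativity
  have hKle : ∀ t ∈ Set.Ioi x, K ≤ c * β - p * t ^ (-β) := by
    intro t ht
    have hmono : t ^ (-β) ≤ x ^ (-β) :=
      Real.rpow_le_rpow_of_nonpos hx (le_of_lt ht) (neg_nonpos.mpr hβ.le)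
    have := mul_le_mul_of_nonneg_left hmono h1
    simp only [hK, hp] at this ⊢
    linarith
  have hhnonneg : ∀ t ∈ Set.Ioi x, 0 ≤ t ^ a * Real.exp (-c * t ^ β) := fun t ht =>
    mul_nonneg (Real.rpow_nonneg (hx.trans ht).le _) (Real.exp_pos _).le
  have hg'nonneg : ∀ t ∈ Set.Ioi x, 0 ≤ g' t := fun t ht =>
    mul_nonneg (le_trans h2.le (hKle t ht)) (hhnonneg t ht)
  -- g tends to 0 at infinity
  have htends : Filter.Tendsto g Filter.atTop (nhds 0) := by
    have h0 : Filter.Tendsto (fun u : ℝ => u ^ (p / β) * Real.exp (-c * u))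
        Filter.atTop (nhds 0) := tendsto_rpow_mul_exp_neg_mul_atTop_nhds_zero _ _ hc
    have h1' : Filter.Tendsto (fun t : ℝ => t ^ β) Filter.atTop Filter.atTop :=
      tendsto_rpow_atTop hβ
    have h2' := h0.comp h1'
    have h3' : Filter.Tendsto (fun t : ℝ => t ^ p * Real.exp (-c * t ^ β))
        Filter.atTop (nhds 0) := by
      apply h2'.congr'
      filter_upwards [Filter.eventually_gt_atTop 0] with t ht
      have : (t ^ β) ^ (p / β) = t ^ p := by
        rw [← Real.rpow_mul ht.le]
        congr 1
        field_simp
      simp only [Function.comp, this]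
    simpa [hg] using h3'.neg
  -- FTC on [x, ∞)
  have hcont : ContinuousWithinAt g (Set.Ici x) x :=
    (hderiv x Set.self_mem_Ici).continuousAt.continuousWithinAt
  have hderiv' : ∀ t ∈ Set.Ioi x, HasDerivAt g (g' t) t := fun t ht => hderiv t (Set.Ioi_subset_Ici_self ht)
  have hint : IntegrableOn g' (Set.Ioi x) :=
    integrableOn_Ioi_deriv_of_nonneg hcont hderiv' hg'nonneg htends
  have hval : ∫ t in Set.Ioi x, g' t = x ^ p * Real.exp (-c * x ^ β) := by
    rw [integral_Ioi_of_hasDerivAt_of_nonneg hcont hderiv' hg'nonneg htends]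
    simp [hg]
  -- comparison
  have hKpos : 0 < K := h2
  have hpt : ∀ t ∈ Set.Ioi x,
      t ^ a * Real.exp (-c * t ^ β) ≤ K⁻¹ * g' t := by
    intro t ht
    have h := mul_le_mul_of_nonneg_right (hKle t ht) (hhnonneg t ht)
    calc t ^ a * Real.exp (-c * t ^ β)
        = K⁻¹ * (K * (t ^ a * Real.exp (-c * t ^ β))) := by
          rw [← mul_assoc, inv_mul_cancel₀ hKpos.ne', one_mul]
      _ ≤ K⁻¹ * g' t := mul_le_mul_of_nonneg_left h (inv_nonneg.mpr hKpos.le)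
  have hmeas : AEStronglyMeasurable (fun t : ℝ => t ^ a * Real.exp (-c * t ^ β))
      (volume.restrict (Set.Ioi x)) := by
    apply Measurable.aestronglyMeasurable
    fun_prop
  have hintH : IntegrableOn (fun t : ℝ => t ^ a * Real.exp (-c * t ^ β)) (Set.Ioi x) := by
    apply Integrable.mono' (hint.const_mul K⁻¹) hmeas
    filter_upwards [ae_restrict_mem measurableSet_Ioi] with t ht
    rw [Real.norm_of_nonneg (hhnonneg t ht)]
    exact hpt t ht
  calc ∫ t in Set.Ioi x, t ^ a * Real.exp (-c * t ^ β)
      ≤ ∫ t in Set.Ioi x, K⁻¹ * g' t :=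
        setIntegral_mono_on hintH (hint.const_mul K⁻¹) measurableSet_Ioi hpt
    _ = K⁻¹ * (x ^ p * Real.exp (-c * x ^ β)) := by
        rw [integral_const_mul, hval]
    _ = K⁻¹ * x ^ p * Real.exp (-c * x ^ β) := by ring
end

section
/- Let (s_j)_{j≥1} be an i.i.d. sequence of exponential random variables with rate 1, and for t ≥ 0 let N_t = #{i ≥ 1 : s_1 + ⋯ + s_i ≤ t} (a Poisson process with intensity 1). Then for every T > 0, P(there exists t ≥ 0 with N_t ≥ 2·max(t, T)) ≤ e^{−T/4}. -/
open MeasureTheory ProbabilityTheory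

noncomputable def gg (x : ℝ) : ℝ := min (Real.exp (-x)) 1

lemma gg_meas : Measurable gg := (Real.measurable_exp.comp measurable_neg).min measurable_const

lemma gg_nonneg (x : ℝ) : 0 ≤ gg x := le_min (Real.exp_pos _).le zero_le_one

lemma gg_le_two (x : ℝ) : gg x ≤ 1 := min_le_right _ _

lemma gg_of_nonneg {x : ℝ} (hx : 0 ≤ x) : gg x = Real.exp (-x) :=
  min_eq_left (Real.exp_le_one_iff.mpr (neg_nonpos.mpr hx))

lemma integral_exp_neg_two_mul : ∫ x in Set.Ioi (0:ℝ), Real.exp (-(2*x)) = 1/2 := by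
  have hderiv : ∀ x ∈ Set.Ici (0:ℝ), HasDerivAt (fun y => -Real.exp (-(2*y))/2) (Real.exp (-(2*x))) x := by
    intro x _
    have h1 : HasDerivAt (fun y : ℝ => -(2*y)) (-2) x := by
      simpa using ((hasDerivAt_id x).const_mul (-2 : ℝ))
    have h2 : HasDerivAt (fun y => -Real.exp (-(2*y))/2) (-(Real.exp (-(2*x)) * -2)/2) x :=
      (h1.exp.neg).div_const (2:ℝ)
    convert h2 using 1
    ring
  have hint : IntegrableOn (fun x => Real.exp (-(2*x))) (Set.Ioi (0:ℝ)) := by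
    simpa [neg_mul] using exp_neg_integrableOn_Ioi (0:ℝ) (two_pos)
  have htend : Filter.Tendsto (fun y => -Real.exp (-(2*y))/2) Filter.atTop (nhds 0) := by
    have h0 : Filter.Tendsto (fun y : ℝ => 2*y) Filter.atTop Filter.atTop :=
      Filter.Tendsto.const_mul_atTop two_pos Filter.tendsto_id
    have := (Real.tendsto_exp_neg_atTop_nhds_zero.comp h0).neg.div_const (2:ℝ)
    simpa using this
  have := integral_Ioi_of_hasDerivAt_of_tendsto' hderiv hint htend
  rw [this]
  norm_num

lemma integral_gg_expMeasure : ∫ x, gg x ∂(expMeasure 1) = 1/2 := by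
  have hexp : expMeasure 1 = (volume : Measure ℝ).withDensity (exponentialPDF 1) := rfl
  have hpdfm : Measurable (exponentialPDF 1) :=
    (measurable_exponentialPDFReal 1).ennreal_ofReal
  rw [hexp, integral_eq_lintegral_of_nonneg_ae (Filter.Eventually.of_forall gg_nonneg)
    gg_meas.aestronglyMeasurable,
    lintegral_withDensity_eq_lintegral_mul _ hpdfm (gg_meas.ennreal_ofReal)]
  have hpt : ∀ x : ℝ, (exponentialPDF 1 * fun a => ENNReal.ofReal (gg a)) x
      = Set.indicator (Set.Ici (0:ℝ)) (fun x => ENNReal.ofReal (Real.exp (-(2*x)))) x := by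
    intro x
    simp only [Pi.mul_apply, exponentialPDF_eq, Set.indicator_apply, Set.mem_Ici]
    rcases lt_trichotomy x 0 with h | h | h
    · rw [if_neg (not_le.mpr h), if_neg (not_le.mpr h)]
      simp
    · subst h
      rw [if_pos le_rfl, if_pos le_rfl]
      rw [← ENNReal.ofReal_mul (by positivity), gg_of_nonneg le_rfl]
      congr 1
      rw [one_mul, ← Real.exp_add]
      congr 1
      ring
    · rw [if_pos h.le, if_pos h.le, ← ENNReal.ofReal_mul (by positivity), gg_of_nonneg h.le]
      congr 1
      rw [one_mul, ← Real.exp_add]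
      congr 1
      ring
  rw [lintegral_congr hpt, lintegral_indicator measurableSet_Ici,
    setLIntegral_congr (Ioi_ae_eq_Ici (μ := (volume : Measure ℝ)) (a := (0:ℝ))).symm]
  have hint : IntegrableOn (fun x => Real.exp (-(2*x))) (Set.Ioi (0:ℝ)) := by
    simpa [neg_mul] using exp_neg_integrableOn_Ioi (0:ℝ) (two_pos)
  rw [← ofReal_integral_eq_lintegral_ofReal hint (Filter.Eventually.of_forall (fun x => (Real.exp_pos _).le)),
    integral_exp_neg_two_mul]
  norm_num

lemma integral_two_gg {Ω : Type*} [MeasurableSpace Ω] (μ : Measure Ω)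
    (f : Ω → ℝ) (hf : Measurable f) (hd : Measure.map f μ = expMeasure 1) :
    ∫ ω, 2 * gg (f ω) ∂μ = 1 := by
  have h1 := integral_map (μ := μ) hf.aemeasurable
    (((gg_meas.const_mul 2)).aestronglyMeasurable (μ := Measure.map f μ))
  rw [hd] at h1
  rw [← h1, MeasureTheory.integral_const_mul, integral_gg_expMeasure]
  norm_num

lemma map_neg_zero {Ω : Type*} [MeasurableSpace Ω] (μ : Measure Ω)
    (f : Ω → ℝ) (hf : Measurable f) (hd : Measure.map f μ = expMeasure 1) :
    μ {ω | f ω < 0} = 0 := by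
  have h : {ω | f ω < 0} = f ⁻¹' (Set.Iio 0) := rfl
  rw [h, ← Measure.map_apply hf measurableSet_Iio, hd]
  show (volume : Measure ℝ).withDensity (exponentialPDF 1) (Set.Iio 0) = 0
  rw [withDensity_apply _ measurableSet_Iio]
  exact lintegral_exponentialPDF_of_nonpos le_rfl

/-- Maximal estimate for a rate-one Poisson process built from i.i.d. exponential
interarrival times: `P(∃ t ≥ 0, N_t ≥ 2·max(t,T)) ≤ e^{−T/4}`. -/
theorem poisson_process_upper_maximal {Ω : Type*} [MeasurableSpace Ω]
    (μ : Measure Ω) [IsProbabilityMeasure μ]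
    (s : ℕ → Ω → ℝ) (hmeas : ∀ j, Measurable (s j))
    (hindep : iIndepFun s μ)
    (hdist : ∀ j, Measure.map (s j) μ = expMeasure 1)
    (N : ℝ → Ω → ℕ)
    (hN : ∀ t ω, N t ω = Set.ncard {i : ℕ | ∑ j ∈ Finset.range (i + 1), s j ω ≤ t})
    (T : ℝ) (hT : 0 < T) :
    μ {ω | ∃ t : ℝ, 0 ≤ t ∧ 2 * max t T ≤ (N t ω : ℝ)} ≤
      ENNReal.ofReal (Real.exp (-T / 4)) := by
  classical
  -- the transformed variables
  set u : ℕ → Ω → ℝ := fun j => (fun x => 2 * gg x) ∘ s j with hu_def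
  have humeas : ∀ j, Measurable (u j) := fun j => (gg_meas.const_mul 2).comp (hmeas j)
  have hu_indep : iIndepFun u μ :=
    hindep.comp (fun _ x => 2 * gg x) (fun _ => gg_meas.const_mul 2)
  set P : Finset ℕ → Ω → ℝ := fun F ω => ∏ j ∈ F, u j ω with hP_def
  have hPmeas : ∀ F, Measurable (P F) := fun F =>
    Finset.measurable_prod F (fun j _ => humeas j)
  have hunn : ∀ j ω, 0 ≤ u j ω ∧ u j ω ≤ 2 := by
    intro j ω
    have h1 := gg_nonneg (s j ω)
    have h2 := gg_le_two (s j ω)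
    constructor <;> · simp only [hu_def, Function.comp_apply]; linarith
  have hPnonneg : ∀ F ω, 0 ≤ P F ω := fun F ω =>
    Finset.prod_nonneg fun j _ => (hunn j ω).1
  have hPle : ∀ F ω, P F ω ≤ 2 ^ F.card := by
    intro F ω
    have := Finset.prod_le_prod (s := F) (f := fun j => u j ω) (g := fun _ => (2:ℝ))
      (fun j _ => (hunn j ω).1)
      (fun j _ => (hunn j ω).2)
    simpa using this
  have hPint : ∀ F, Integrable (P F) μ := by
    intro F
    refine (integrable_const ((2:ℝ) ^ F.card)).mono' (hPmeas F).aestronglyMeasurable ?_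
    refine Filter.Eventually.of_forall fun ω => ?_
    rw [Real.norm_eq_abs, abs_of_nonneg (hPnonneg F ω)]
    exact hPle F ω
  -- the product has integral one
  have hPone : ∀ F : Finset ℕ, ∫ ω, P F ω ∂μ = 1 := by
    intro F
    induction F using Finset.induction_on with
    | empty => simp [hP_def]
    | @insert i F hiF ih =>
      have hIndep : IndepFun (u i) (∏ j ∈ F, u j) μ :=
        (hu_indep.indepFun_finset_prod_of_notMem humeas hiF).symm
      have hprodmeas : Measurable (∏ j ∈ F, u j) := by
        have : (∏ j ∈ F, u j) = fun ω => ∏ j ∈ F, u j ω := by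
          funext ω; exact Finset.prod_apply ω F u
        rw [this]; exact hPmeas F
      have h1 : ∫ ω, P (insert i F) ω ∂μ = ∫ ω, u i ω * (∏ j ∈ F, u j) ω ∂μ := by
        apply integral_congr_ae
        refine Filter.Eventually.of_forall fun ω => ?_
        simp only [hP_def, Finset.prod_apply]
        rw [Finset.prod_insert hiF]
      rw [h1, hIndep.integral_fun_mul_eq_mul_integral (humeas i).aestronglyMeasurable
        hprodmeas.aestronglyMeasurable]
      have h2 : ∫ ω, u i ω ∂μ = 1 := integral_two_gg μ (s i) (hmeas i) (hdist i)
      have h3 : ∫ ω, (∏ j ∈ F, u j) ω ∂μ = 1 := by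
        rw [← ih]
        apply integral_congr_ae
        exact Filter.Eventually.of_forall fun ω => Finset.prod_apply ω F u
      rw [h2, h3]
      norm_num
  -- the events, expressed through the coordinate map
  set pre : Ω → (ℕ → ℝ) := fun ω j => s j ω with hpre_def
  have hpre : Measurable pre := measurable_pi_lambda _ hmeas
  set Bv : ℕ → Set (ℕ → ℝ) := fun n =>
    {v | 2*T ≤ (n:ℝ) ∧ (∑ j ∈ Finset.range n, v j) ≤ (n:ℝ)/2 ∧ ∀ j ∈ Finset.range n, 0 ≤ v j}
    with hBv_def
  have hBv_meas : ∀ n, MeasurableSet (Bv n) := by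
    intro n
    have heq : Bv n = {v : ℕ → ℝ | 2*T ≤ (n:ℝ)} ∩
        ({v | (∑ j ∈ Finset.range n, v j) ≤ (n:ℝ)/2} ∩
          ⋂ j ∈ Finset.range n, {v | 0 ≤ v j}) := by
      ext v
      simp only [hBv_def, Set.mem_setOf_eq, Set.mem_inter_iff, Set.mem_iInter]
      try tauto
    rw [heq]
    refine (MeasurableSet.const _).inter (MeasurableSet.inter ?_ ?_)
    · exact measurableSet_le (Finset.measurable_sum _ fun j _ => measurable_pi_apply j)
        measurable_const
    · exact MeasurableSet.biInter (Set.to_countable _)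
        fun j _ => measurableSet_le measurable_const (measurable_pi_apply j)
  set Dv : ℕ → Set (ℕ → ℝ) := fun n => Bv n \ ⋃ k ∈ Finset.range n, Bv k with hDv_def
  have hDv_meas : ∀ n, MeasurableSet (Dv n) := fun n =>
    (hBv_meas n).diff (MeasurableSet.biUnion (Set.to_countable _) fun k _ => hBv_meas k)
  set B : ℕ → Set Ω := fun n => pre ⁻¹' Bv n with hB_def
  set D : ℕ → Set Ω := fun n => pre ⁻¹' Dv n with hD_def
  have hBmeas : ∀ n, MeasurableSet (B n) := fun n => hpre (hBv_meas n)
  have hDmeas : ∀ n, MeasurableSet (D n) := fun n => hpre (hDv_meas n)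
  have hD_eq : ∀ n, D n = B n \ ⋃ k ∈ Finset.range n, B k := by
    intro n
    simp only [hD_def, hDv_def, hB_def, Set.preimage_diff, Set.preimage_iUnion]
  have hDsubB : ∀ n, D n ⊆ B n := by
    intro n; rw [hD_eq n]; exact Set.diff_subset
  have hDdisj : Pairwise (Function.onFun Disjoint D) := by
    intro i j hij
    have key : ∀ i j : ℕ, i < j → Disjoint (D i) (D j) := by
      intro i j hlt
      rw [Set.disjoint_left]
      intro ω hωi hωj
      rw [hD_eq j] at hωj
      exact hωj.2 (Set.mem_biUnion (Finset.mem_range.mpr hlt) (hDsubB i hωi))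
    rcases hij.lt_or_gt with h | h
    · exact key i j h
    · exact (key j i h).symm
  have hUnionBD : (⋃ n, B n) = ⋃ n, D n := by
    apply Set.Subset.antisymm
    · intro ω hω
      rw [Set.mem_iUnion] at hω ⊢
      have hex : ∃ n, ω ∈ B n := hω
      refine ⟨Nat.find hex, ?_⟩
      rw [hD_eq]
      refine ⟨Nat.find_spec hex, ?_⟩
      intro hmem
      rw [Set.mem_iUnion₂] at hmem
      obtain ⟨k, hk, hωk⟩ := hmem
      exact Nat.find_min hex (Finset.mem_range.mp hk) hωk
    · exact Set.iUnion_mono fun n => hDsubB n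
  -- pathwise inclusion of the event
  have hsub : {ω | ∃ t : ℝ, 0 ≤ t ∧ 2 * max t T ≤ (N t ω : ℝ)} ⊆
      (⋃ n, B n) ∪ ⋃ j, {ω | s j ω < 0} := by
    intro ω hω
    by_cases hG : ∀ j, 0 ≤ s j ω
    swap
    · right
      push_neg at hG
      obtain ⟨j, hj⟩ := hG
      exact Set.mem_iUnion.mpr ⟨j, hj⟩
    left
    obtain ⟨t, ht0, hNt⟩ := hω
    set K : Set ℕ := {i : ℕ | ∑ j ∈ Finset.range (i + 1), s j ω ≤ t} with hK_def
    rw [hN t ω] at hNt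
    have hKpos : 0 < K.ncard := by
      have h0 : (0:ℝ) < 2 * max t T := by
        have : 0 < max t T := lt_of_lt_of_le hT (le_max_right t T)
        linarith
      exact_mod_cast lt_of_lt_of_le h0 hNt
    have hKfin : K.Finite := by
      by_contra hinf
      rw [Set.Infinite.ncard hinf] at hKpos
      exact lt_irrefl 0 hKpos
    have hKne : K.Nonempty := Set.nonempty_of_ncard_ne_zero hKpos.ne'
    have hlow : ∀ i i' : ℕ, i ≤ i' → i' ∈ K → i ∈ K := by
      intro i i' hii hi'
      simp only [hK_def, Set.mem_setOf_eq] at hi' ⊢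
      refine le_trans (Finset.sum_le_sum_of_subset_of_nonneg ?_ ?_) hi'
      · exact Finset.range_subset_range.mpr (by omega)
      · intro j _ _; exact hG j
    set F : Finset ℕ := hKfin.toFinset with hF_def
    have hFne : F.Nonempty := Set.Finite.toFinset_nonempty hKfin |>.mpr hKne
    set M0 : ℕ := F.max' hFne with hM0_def
    have hM0K : M0 ∈ K := by
      exact hKfin.mem_toFinset.mp (F.max'_mem hFne)
    have hKeq : K = Set.Iic M0 := by
      apply Set.Subset.antisymm
      · intro i hi
        exact F.le_max' i (hKfin.mem_toFinset.mpr hi)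
      · intro i hi
        exact hlow i M0 hi hM0K
    have hcard : K.ncard = M0 + 1 := by
      rw [hKeq, ← Finset.coe_Iic, Set.ncard_coe_finset, Nat.card_Iic]
    have hcast : ((K.ncard : ℕ) : ℝ) = (M0 : ℝ) + 1 := by exact_mod_cast congrArg (Nat.cast (R := ℝ)) hcard
    have hNt2 : 2 * max t T ≤ (M0 : ℝ) + 1 := by rw [← hcast]; exact hNt
    refine Set.mem_iUnion.mpr ⟨M0 + 1, ?_, ?_, ?_⟩
    · push_cast
      calc 2*T ≤ 2 * max t T := by
            have := le_max_right t T; linarith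
        _ ≤ (M0:ℝ) + 1 := hNt2
    · have h2t : 2 * t ≤ ((M0:ℝ) + 1) := by
        calc 2*t ≤ 2 * max t T := by have := le_max_left t T; linarith
          _ ≤ (M0:ℝ) + 1 := hNt2
      have hSm : ∑ j ∈ Finset.range (M0 + 1), s j ω ≤ t := hM0K
      push_cast
      linarith
    · intro j _
      exact hG j
  -- constants
  set a : ℝ := Real.exp (2*T*(Real.log 2 - 1/2)) with ha_def
  have ha : 0 < a := Real.exp_pos _
  have hlog2 : (0.6931471803 : ℝ) < Real.log 2 := Real.log_two_gt_d9
  -- key single-n estimate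
  have hkey : ∀ M n : ℕ, n < M →
      a * (μ (D n)).toReal ≤ ∫ ω, (D n).indicator (P (Finset.range M)) ω ∂μ := by
    intro M n hnM
    -- pointwise bound on D n
    have hptw : ∀ ω, (D n).indicator (fun _ => a) ω ≤ (D n).indicator (P (Finset.range n)) ω := by
      intro ω
      by_cases hω : ω ∈ D n
      · rw [Set.indicator_of_mem hω, Set.indicator_of_mem hω]
        obtain ⟨h2T, hsum, hpos⟩ := hDsubB n hω
        have hprod : P (Finset.range n) ω
            = 2 ^ n * Real.exp (-(∑ j ∈ Finset.range n, s j ω)) := by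
          have : ∀ j ∈ Finset.range n, u j ω = 2 * Real.exp (-(s j ω)) := by
            intro j hj
            simp only [hu_def, Function.comp_apply]
            rw [gg_of_nonneg (hpos j hj)]
          rw [hP_def]
          simp only []
          rw [Finset.prod_congr rfl this, Finset.prod_mul_distrib, Finset.prod_const,
            Finset.card_range, ← Real.exp_sum]
          congr 1
          rw [← Finset.sum_neg_distrib]
        rw [hprod]
        have h2n : (2:ℝ) ^ n = Real.exp ((n:ℝ) * Real.log 2) := by
          rw [Real.exp_nat_mul, Real.exp_log (by norm_num : (0:ℝ) < 2)]
        have hstep1 : a ≤ Real.exp ((n:ℝ) * Real.log 2 + (-(n/2 : ℝ))) := by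
          rw [ha_def, Real.exp_le_exp]
          have hn2T : 2*T ≤ (n:ℝ) := h2T
          nlinarith [hlog2]
        calc a ≤ Real.exp ((n:ℝ) * Real.log 2 + (-((n:ℝ)/2))) := hstep1
          _ = Real.exp ((n:ℝ) * Real.log 2) * Real.exp (-((n:ℝ)/2)) := Real.exp_add _ _
          _ ≤ Real.exp ((n:ℝ) * Real.log 2) * Real.exp (-(∑ j ∈ Finset.range n, s j ω)) := by
              apply mul_le_mul_of_nonneg_left _ (Real.exp_pos _).le
              exact Real.exp_le_exp.mpr (by linarith)
          _ = 2 ^ n * Real.exp (-(∑ j ∈ Finset.range n, s j ω)) := by rw [h2n]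
      · rw [Set.indicator_of_notMem hω, Set.indicator_of_notMem hω]
    have hconst_int : Integrable ((D n).indicator (fun _ => a)) μ :=
      (integrable_const a).indicator (hDmeas n)
    have hPn_ind_int : Integrable ((D n).indicator (P (Finset.range n))) μ :=
      (hPint (Finset.range n)).indicator (hDmeas n)
    have hstep2 : a * (μ (D n)).toReal ≤ ∫ ω, (D n).indicator (P (Finset.range n)) ω ∂μ := by
      have hci : ∫ ω, (D n).indicator (fun _ => a) ω ∂μ = (μ (D n)).toReal * a := by
        rw [integral_indicator_const a (hDmeas n)]
        simp [smul_eq_mul, measureReal_def]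
      calc a * (μ (D n)).toReal = ∫ ω, (D n).indicator (fun _ => a) ω ∂μ := by
            rw [hci]; ring
        _ ≤ _ := integral_mono hconst_int hPn_ind_int hptw
    -- independence step
    have hdisjF : Disjoint (Finset.range n) (Finset.Ico n M) := by
      simp only [Finset.disjoint_left, Finset.mem_range, Finset.mem_Ico]
      omega
    set E : ((i : (Finset.range n : Finset ℕ)) → ℝ) → (ℕ → ℝ) :=
      fun w j => if h : j ∈ Finset.range n then w ⟨j, h⟩ else 0 with hE_def
    have hE : Measurable E := by
      apply measurable_pi_lambda
      intro j
      by_cases h : j ∈ Finset.range n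
      · simp only [hE_def, dif_pos h]
        exact measurable_pi_apply _
      · simp only [hE_def, dif_neg h]
        exact measurable_const
    set φ : ((i : (Finset.range n : Finset ℕ)) → ℝ) → ℝ :=
      fun w => Set.indicator (Dv n) (fun v => ∏ j ∈ Finset.range n, 2 * gg (v j)) (E w)
      with hφ_def
    have hφ : Measurable φ :=
      Measurable.comp
        (Measurable.indicator
          (Finset.measurable_prod _ fun j _ => ((gg_meas.comp (measurable_pi_apply j)).const_mul 2))
          (hDv_meas n)) hE
    set ψ : ((i : (Finset.Ico n M : Finset ℕ)) → ℝ) → ℝ :=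
      fun w => ∏ i : (Finset.Ico n M : Finset ℕ), 2 * gg (w i) with hψ_def
    have hψ : Measurable ψ :=
      Finset.measurable_prod _ fun i _ => ((gg_meas.comp (measurable_pi_apply i)).const_mul 2)
    have hIF := (hindep.indepFun_finset (Finset.range n) (Finset.Ico n M) hdisjF hmeas).comp hφ hψ
    -- identify the two composed functions
    have hdep : ∀ v w : ℕ → ℝ, (∀ j ∈ Finset.range n, v j = w j) → (v ∈ Dv n ↔ w ∈ Dv n) := by
      intro v w hvw
      have hBiff : ∀ k : ℕ, k ≤ n → (v ∈ Bv k ↔ w ∈ Bv k) := by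
        intro k hk
        simp only [hBv_def, Set.mem_setOf_eq]
        have hsumeq : (∑ j ∈ Finset.range k, v j) = ∑ j ∈ Finset.range k, w j := by
          apply Finset.sum_congr rfl
          intro j hj
          exact hvw j (Finset.mem_range.mpr (lt_of_lt_of_le (Finset.mem_range.mp hj) hk))
        have hnn : (∀ j ∈ Finset.range k, 0 ≤ v j) ↔ (∀ j ∈ Finset.range k, 0 ≤ w j) := by
          constructor <;> intro h j hj <;>
            have := hvw j (Finset.mem_range.mpr (lt_of_lt_of_le (Finset.mem_range.mp hj) hk))
          · rw [← this]; exact h j hj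
          · rw [this]; exact h j hj
        rw [hsumeq, hnn]
      simp only [hDv_def, Set.mem_diff, Set.mem_iUnion]
      rw [hBiff n le_rfl]
      constructor <;> rintro ⟨h1, h2⟩ <;> refine ⟨h1, ?_⟩ <;> intro hc <;> apply h2 <;>
        obtain ⟨k, hk, hmemk⟩ := hc
      · exact ⟨k, hk, (hBiff k (Finset.mem_range.mp hk).le).mpr hmemk⟩
      · exact ⟨k, hk, (hBiff k (Finset.mem_range.mp hk).le).mp hmemk⟩
    have hEpre : ∀ ω, ∀ j ∈ Finset.range n, E (fun i : (Finset.range n : Finset ℕ) => s i ω) j = s j ω := by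
      intro ω j hj
      simp only [hE_def, dif_pos hj]
    have hXeq : (fun ω => (D n).indicator (P (Finset.range n)) ω)
        = φ ∘ (fun ω (i : (Finset.range n : Finset ℕ)) => s i ω) := by
      funext ω
      simp only [Function.comp_apply, hφ_def]
      have hmem : (E (fun i : (Finset.range n : Finset ℕ) => s i ω) ∈ Dv n) ↔ ω ∈ D n := by
        rw [hD_def]
        exact hdep _ _ (hEpre ω)
      by_cases hω : ω ∈ D n
      · rw [Set.indicator_of_mem hω, Set.indicator_of_mem (hmem.mpr hω)]
        rw [hP_def]
        apply Finset.prod_congr rfl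
        intro j hj
        rw [hEpre ω j hj]
        rfl
      · rw [Set.indicator_of_notMem hω, Set.indicator_of_notMem (fun c => hω (hmem.mp c))]
    have hZeq : (fun ω => P (Finset.Ico n M) ω)
        = ψ ∘ (fun ω (i : (Finset.Ico n M : Finset ℕ)) => s i ω) := by
      funext ω
      simp only [Function.comp_apply, hψ_def, hP_def]
      rw [← Finset.prod_coe_sort (Finset.Ico n M) (fun j => u j ω)]
      rfl
    have hindXZ : IndepFun (fun ω => (D n).indicator (P (Finset.range n)) ω)
        (fun ω => P (Finset.Ico n M) ω) μ := by
      rw [hXeq, hZeq]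
      exact hIF
    have hXmeas : Measurable (fun ω => (D n).indicator (P (Finset.range n)) ω) :=
      (hPmeas (Finset.range n)).indicator (hDmeas n)
    have hint_eq : ∫ ω, (D n).indicator (P (Finset.range n)) ω ∂μ
        = ∫ ω, (D n).indicator (P (Finset.range M)) ω ∂μ := by
      have hmul := hindXZ.integral_fun_mul_eq_mul_integral hXmeas.aestronglyMeasurable
        (hPmeas (Finset.Ico n M)).aestronglyMeasurable
      have hZ1 : ∫ ω, P (Finset.Ico n M) ω ∂μ = 1 := hPone (Finset.Ico n M)
      have hXZ : ∀ ω, (D n).indicator (P (Finset.range n)) ω * P (Finset.Ico n M) ω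
          = (D n).indicator (P (Finset.range M)) ω := by
        intro ω
        by_cases hω : ω ∈ D n
        · rw [Set.indicator_of_mem hω, Set.indicator_of_mem hω]
          rw [hP_def]
          simp only []
          rw [Finset.range_eq_Ico, Finset.range_eq_Ico]
          exact Finset.prod_Ico_consecutive (fun j => u j ω) (Nat.zero_le n) (le_of_lt hnM)
        · rw [Set.indicator_of_notMem hω, Set.indicator_of_notMem hω, zero_mul]
      rw [hZ1, mul_one] at hmul
      rw [← hmul]
      apply integral_congr_ae
      exact Filter.Eventually.of_forall fun ω => hXZ ω
    rw [← hint_eq]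
    exact hstep2
  -- sum over n < M
  have hsumM : ∀ M : ℕ, ∑ n ∈ Finset.range M, (μ (D n)).toReal ≤ 1/a := by
    intro M
    have hterm_int : ∀ n ∈ Finset.range M,
        Integrable (fun ω => (D n).indicator (P (Finset.range M)) ω) μ :=
      fun n _ => (hPint (Finset.range M)).indicator (hDmeas n)
    have hsum_le : ∑ n ∈ Finset.range M, ∫ ω, (D n).indicator (P (Finset.range M)) ω ∂μ ≤ 1 := by
      rw [← integral_finset_sum _ hterm_int]
      have hpt : ∀ ω, ∑ n ∈ Finset.range M, (D n).indicator (P (Finset.range M)) ω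
          ≤ P (Finset.range M) ω := by
        intro ω
        by_cases h : ∃ n0 ∈ Finset.range M, ω ∈ D n0
        · obtain ⟨n0, hn0, hmem⟩ := h
          rw [Finset.sum_eq_single_of_mem n0 hn0]
          · rw [Set.indicator_of_mem hmem]
          · intro k hk hkne
            apply Set.indicator_of_notMem
            intro hc
            exact Set.disjoint_left.mp (hDdisj hkne) hc hmem
        · push_neg at h
          rw [Finset.sum_eq_zero fun k hk => Set.indicator_of_notMem (h k hk) _]
          exact hPnonneg _ ω
      calc ∫ ω, ∑ n ∈ Finset.range M, (D n).indicator (P (Finset.range M)) ω ∂μ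
          ≤ ∫ ω, P (Finset.range M) ω ∂μ :=
            integral_mono (integrable_finset_sum _ hterm_int) (hPint _) hpt
        _ = 1 := hPone _
    have hfin : a * ∑ n ∈ Finset.range M, (μ (D n)).toReal ≤ 1 := by
      rw [Finset.mul_sum]
      calc ∑ n ∈ Finset.range M, a * (μ (D n)).toReal
          ≤ ∑ n ∈ Finset.range M, ∫ ω, (D n).indicator (P (Finset.range M)) ω ∂μ :=
            Finset.sum_le_sum fun n hn => hkey M n (Finset.mem_range.mp hn)
        _ ≤ 1 := hsum_le
    rw [le_div_iff₀ ha, mul_comm]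
    exact hfin
  -- pass to the infinite union
  have htsum : μ (⋃ n, B n) ≤ ENNReal.ofReal (1/a) := by
    rw [hUnionBD, measure_iUnion hDdisj hDmeas]
    apply ENNReal.tsum_le_of_sum_range_le
    intro M
    have heq : ∑ n ∈ Finset.range M, μ (D n)
        = ENNReal.ofReal (∑ n ∈ Finset.range M, (μ (D n)).toReal) := by
      rw [ENNReal.ofReal_sum_of_nonneg (fun n _ => ENNReal.toReal_nonneg)]
      apply Finset.sum_congr rfl
      intro n _
      rw [ENNReal.ofReal_toReal (measure_ne_top μ _)]
    rw [heq]
    exact ENNReal.ofReal_le_ofReal (hsumM M)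
  -- conclusion
  have hfinal : ENNReal.ofReal (1/a) ≤ ENNReal.ofReal (Real.exp (-T/4)) := by
    apply ENNReal.ofReal_le_ofReal
    rw [ha_def, one_div, ← Real.exp_neg, Real.exp_le_exp]
    nlinarith [hlog2, hT]
  calc μ {ω | ∃ t : ℝ, 0 ≤ t ∧ 2 * max t T ≤ (N t ω : ℝ)}
      ≤ μ ((⋃ n, B n) ∪ ⋃ j, {ω | s j ω < 0}) := measure_mono hsub
    _ ≤ μ (⋃ n, B n) + μ (⋃ j, {ω | s j ω < 0}) := measure_union_le _ _
    _ = μ (⋃ n, B n) := by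
        rw [measure_iUnion_null fun j => map_neg_zero μ (s j) (hmeas j) (hdist j), add_zero]
    _ ≤ ENNReal.ofReal (1/a) := htsum
    _ ≤ ENNReal.ofReal (Real.exp (-T/4)) := hfinal
end

section
/- Let x, y : [0, ∞) → ℝ be differentiable functions satisfying, for all t ≥ 0, x'(t) = x(t)·z(t) + z(t)² − x(t)·y(t) and y'(t) = y(t)·z(t) + z(t)² − x(t)·y(t), where z(t) := 1 − x(t) − y(t). If x(0) ≥ 0, y(0) ≥ 0 and x(0) + y(0) ≤ 1, then for all t ≥ 0 one has x(t) ≥ 0, y(t) ≥ 0 and x(t) + y(t) ≤ 1. -/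
open Real Set Filter Topology

set_option maxHeartbeats 1000000

private lemma no_cross (W : ℝ → ℝ) (t₀ d : ℝ) (ht₀ : 0 < t₀) (hd : 0 < d)
    (hW : HasDerivAt W d t₀) (hW0 : W t₀ = 0)
    (hpos : ∀ s, 0 ≤ s → s < t₀ → 0 < W s) : False := by
  rw [hasDerivAt_iff_tendsto_slope] at hW
  have h1 : ∀ᶠ s in 𝓝[≠] t₀, 0 < slope W t₀ s := hW.eventually (eventually_gt_nhds hd)
  have h2 : ∀ᶠ s in 𝓝[<] t₀, 0 < slope W t₀ s :=
    h1.filter_mono (nhdsWithin_mono _ fun s hs => ne_of_lt hs)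
  have h3 : ∀ᶠ s in 𝓝[<] t₀, s ∈ Ioo 0 t₀ :=
    eventually_of_mem (Ioo_mem_nhdsLT_of_mem ⟨ht₀, le_refl _⟩) fun s hs => hs
  obtain ⟨s, hslope, hs⟩ := (h2.and h3).exists
  have hlt : s - t₀ < 0 := sub_neg.mpr hs.2
  have hWs : 0 < W s := hpos s hs.1.le hs.2
  rw [slope_def_field, hW0] at hslope
  have : (W s - 0) / (s - t₀) ≤ 0 :=
    div_nonpos_of_nonneg_of_nonpos (by linarith) hlt.le
  linarith

/-- Invariance of the simplex `{x ≥ 0, y ≥ 0, x + y ≤ 1}` under the mean-field ODE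
`x' = xz + z² − xy`, `y' = yz + z² − xy` with `z = 1 − x − y`. -/

theorem simplex_invariant (x y : ℝ → ℝ)
    (hx : ∀ t : ℝ, 0 ≤ t → HasDerivAt x
      (x t * (1 - x t - y t) + (1 - x t - y t) ^ 2 - x t * y t) t)
    (hy : ∀ t : ℝ, 0 ≤ t → HasDerivAt y
      (y t * (1 - x t - y t) + (1 - x t - y t) ^ 2 - x t * y t) t)
    (hx0 : 0 ≤ x 0) (hy0 : 0 ≤ y 0) (hsum0 : x 0 + y 0 ≤ 1) :
    ∀ t : ℝ, 0 ≤ t → 0 ≤ x t ∧ 0 ≤ y t ∧ x t + y t ≤ 1 := by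
  intro T hT
  have hcx : ContinuousOn x (Icc 0 T) := fun s hs =>
    ((hx s hs.1).continuousAt).continuousWithinAt
  have hcy : ContinuousOn y (Icc 0 T) := fun s hs =>
    ((hy s hs.1).continuousAt).continuousWithinAt
  obtain ⟨Mx, hMx⟩ := isCompact_Icc.exists_bound_of_continuousOn hcx
  obtain ⟨My, hMy⟩ := isCompact_Icc.exists_bound_of_continuousOn hcy
  set M : ℝ := max 0 (max Mx My) with hMdef
  have hM0 : 0 ≤ M := le_max_left 0 _
  have hxb : ∀ s ∈ Icc (0:ℝ) T, |x s| ≤ M := fun s hs => by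
    have := hMx s hs; rw [Real.norm_eq_abs] at this
    exact this.trans (le_max_of_le_right (le_max_left _ _))
  have hyb : ∀ s ∈ Icc (0:ℝ) T, |y s| ≤ M := fun s hs => by
    have := hMy s hs; rw [Real.norm_eq_abs] at this
    exact this.trans (le_max_of_le_right (le_max_right _ _))
  set K : ℝ := 2 + 6 * M with hKdef
  have hKpos : 0 < K := by rw [hKdef]; linarith
  -- key claim: perturbed components stay positive on [0, T]
  have key : ∀ ε : ℝ, 0 < ε → ∀ s ∈ Icc (0:ℝ) T,
      0 < x s + ε * Real.exp (3 * K * s) ∧ 0 < y s + ε * Real.exp (3 * K * s) ∧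
      0 < (1 - x s - y s) + ε * Real.exp (3 * K * s) := by
    intro ε hε
    by_contra hcon
    push_neg at hcon
    obtain ⟨s₀, hs₀, hbad⟩ := hcon
    set E : ℝ → ℝ := fun s => ε * Real.exp (3 * K * s) with hEdef
    have hEpos : ∀ s, 0 < E s := fun s => mul_pos hε (Real.exp_pos _)
    have hEcont : Continuous E := by
      rw [hEdef]; exact continuous_const.mul ((continuous_const.mul continuous_id).rexp)
    set S : Set ℝ := {s | s ∈ Icc 0 T ∧
        (x s + E s ≤ 0 ∨ y s + E s ≤ 0 ∨ (1 - x s - y s) + E s ≤ 0)} with hSdef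
    have hSne : S.Nonempty := by
      refine ⟨s₀, hs₀, ?_⟩
      rcases le_or_gt (x s₀ + E s₀) 0 with h | h1
      · exact Or.inl h
      rcases le_or_gt (y s₀ + E s₀) 0 with h | h2
      · exact Or.inr (Or.inl h)
      exact Or.inr (Or.inr (hbad h1 h2))
    have hzc : ContinuousOn (fun s => 1 - x s - y s) (Icc 0 T) :=
      (continuousOn_const.sub hcx).sub hcy
    have hSclosed : IsClosed S := by
      have e : S = (Icc 0 T ∩ (fun s => x s + E s) ⁻¹' Iic 0) ∪
          ((Icc 0 T ∩ (fun s => y s + E s) ⁻¹' Iic 0) ∪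
           (Icc 0 T ∩ (fun s => (1 - x s - y s) + E s) ⁻¹' Iic 0)) := by
        ext s
        simp only [hSdef, mem_setOf_eq, mem_union, mem_inter_iff, mem_preimage, mem_Iic]
        tauto
      rw [e]
      exact ((hcx.add hEcont.continuousOn).preimage_isClosed_of_isClosed
          isClosed_Icc isClosed_Iic).union
        (((hcy.add hEcont.continuousOn).preimage_isClosed_of_isClosed
          isClosed_Icc isClosed_Iic).union
        ((hzc.add hEcont.continuousOn).preimage_isClosed_of_isClosed
          isClosed_Icc isClosed_Iic))
    have hSbdd : BddBelow S := ⟨0, fun s hs => hs.1.1⟩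
    set t₀ := sInf S with ht₀def
    have ht₀S : t₀ ∈ S := hSclosed.csInf_mem hSne hSbdd
    have ht₀Icc : t₀ ∈ Icc (0:ℝ) T := ht₀S.1
    have hpos : ∀ s, 0 ≤ s → s < t₀ →
        0 < x s + E s ∧ 0 < y s + E s ∧ 0 < (1 - x s - y s) + E s := by
      intro s hs hst
      have hsIcc : s ∈ Icc (0:ℝ) T := ⟨hs, hst.le.trans ht₀Icc.2⟩
      have hns : s ∉ S := fun h => absurd (csInf_le hSbdd h) (not_le.mpr hst)
      simp only [hSdef, mem_setOf_eq, hsIcc, true_and, not_or, not_le] at hns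
      exact hns
    have hE0 : E 0 = ε := by rw [hEdef]; simp
    have ht₀pos : 0 < t₀ := by
      rcases ht₀Icc.1.lt_or_eq with h | h
      · exact h
      exfalso
      rw [← h] at ht₀S
      obtain ⟨-, hc⟩ := ht₀S
      rcases hc with hc | hc | hc <;> rw [hE0] at hc <;> linarith
    have hlim : ∀ W : ℝ → ℝ, ContinuousAt W t₀ →
        (∀ s, 0 ≤ s → s < t₀ → 0 < W s) → 0 ≤ W t₀ := by
      intro W hWc hWpos
      have h1 : Tendsto W (𝓝[<] t₀) (𝓝 (W t₀)) := hWc.tendsto.mono_left nhdsWithin_le_nhds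
      refine ge_of_tendsto h1 ?_
      filter_upwards [Ioo_mem_nhdsLT_of_mem (show t₀ ∈ Ioc 0 t₀ from ⟨ht₀pos, le_refl _⟩)]
        with s hs
      exact (hWpos s hs.1.le hs.2).le
    have hxc₀ : ContinuousAt x t₀ := (hx t₀ ht₀Icc.1).continuousAt
    have hyc₀ : ContinuousAt y t₀ := (hy t₀ ht₀Icc.1).continuousAt
    have hXge : 0 ≤ x t₀ + E t₀ :=
      hlim _ (hxc₀.add hEcont.continuousAt) fun s a b => (hpos s a b).1
    have hYge : 0 ≤ y t₀ + E t₀ :=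
      hlim _ (hyc₀.add hEcont.continuousAt) fun s a b => (hpos s a b).2.1
    have hZge : 0 ≤ (1 - x t₀ - y t₀) + E t₀ :=
      hlim _ (((continuousAt_const.sub hxc₀).sub hyc₀).add hEcont.continuousAt)
        fun s a b => (hpos s a b).2.2
    set p := E t₀ with hpdef
    have hp : 0 < p := hEpos t₀
    have hxM := abs_le.mp (hxb t₀ ht₀Icc)
    have hyM := abs_le.mp (hyb t₀ ht₀Icc)
    have hE' : HasDerivAt E (3 * K * p) t₀ := by
      have h1 : HasDerivAt (fun s : ℝ => 3 * K * s) (3 * K) t₀ := by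
        simpa using (hasDerivAt_id t₀).const_mul (3 * K)
      have h2 := (h1.exp).const_mul ε
      have : ε * (Real.exp (3 * K * t₀) * (3 * K)) = 3 * K * p := by
        rw [hpdef, hEdef]; ring
      rw [this] at h2
      exact h2
    have hdx := hx t₀ ht₀Icc.1
    have hdy := hy t₀ ht₀Icc.1
    rcases ht₀S.2 with hc | hc | hc
    · -- x + E hits zero first
      have h0 : x t₀ + E t₀ = 0 := le_antisymm hc hXge
      have hxval : x t₀ = -p := by rw [hpdef]; linarith
      refine no_cross (fun s => x s + E s) t₀ _ ht₀pos ?_ (hdx.add hE') h0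
        fun s a b => (hpos s a b).1
      rw [hKdef, hxval]
      have hpM : p ≤ M := by have := hxM.1; rw [hxval] at this; linarith
      nlinarith [sq_nonneg (1 + p - y t₀), mul_nonneg hp.le (by linarith : 0 ≤ M - p),
        mul_nonneg hp.le (by linarith [hyM.1] : 0 ≤ M + y t₀), hp, hM0]
    · -- y + E hits zero first
      have h0 : y t₀ + E t₀ = 0 := le_antisymm hc hYge
      have hyval : y t₀ = -p := by rw [hpdef]; linarith
      refine no_cross (fun s => y s + E s) t₀ _ ht₀pos ?_ (hdy.add hE') h0
        fun s a b => (hpos s a b).2.1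
      rw [hKdef, hyval]
      have hpM : p ≤ M := by have := hyM.1; rw [hyval] at this; linarith
      nlinarith [sq_nonneg (1 - x t₀ + p), mul_nonneg hp.le (by linarith : 0 ≤ M - p),
        mul_nonneg hp.le (by linarith [hxM.1] : 0 ≤ M + x t₀), hp, hM0]
    · -- z + E hits zero first
      have h0 : (1 - x t₀ - y t₀) + E t₀ = 0 := le_antisymm hc hZge
      have hzval : 1 - x t₀ - y t₀ = -p := by rw [hpdef]; linarith
      have hxge : -p ≤ x t₀ := by rw [hpdef]; linarith [hXge]
      have hyge : -p ≤ y t₀ := by rw [hpdef]; linarith [hYge]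
      have hd : HasDerivAt (fun s => (1 - x s - y s) + E s)
          ((0 - (x t₀ * (1 - x t₀ - y t₀) + (1 - x t₀ - y t₀) ^ 2 - x t₀ * y t₀)
              - (y t₀ * (1 - x t₀ - y t₀) + (1 - x t₀ - y t₀) ^ 2 - x t₀ * y t₀))
            + 3 * K * p) t₀ :=
        (((hasDerivAt_const t₀ (1:ℝ)).sub hdx).sub hdy).add hE'
      refine no_cross (fun s => (1 - x s - y s) + E s) t₀ _ ht₀pos ?_ hd h0
        fun s a b => (hpos s a b).2.2
      have hp2M : p ≤ 2 * M := by
        have h1 := hxM.2; have h2 := hyM.2; linarith [hzval]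
      have hxy : -(2 * M * p) ≤ 2 * (x t₀ * y t₀) := by
        rcases le_or_gt 0 (x t₀) with hx' | hx' <;> rcases le_or_gt 0 (y t₀) with hy' | hy'
        · nlinarith [mul_nonneg hx' hy', mul_nonneg hM0 hp.le]
        · nlinarith [mul_nonneg hx' (by linarith : 0 ≤ y t₀ + p),
            mul_nonneg hp.le (by linarith [hxM.2] : 0 ≤ M - x t₀)]
        · nlinarith [mul_nonneg hy' (by linarith : 0 ≤ x t₀ + p),
            mul_nonneg hp.le (by linarith [hyM.2] : 0 ≤ M - y t₀)]
        · nlinarith [mul_pos_of_neg_of_neg hx' hy', mul_nonneg hM0 hp.le]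
      rw [hKdef, hzval]
      nlinarith [hxy, mul_nonneg hp.le (by linarith [hxM.2] : 0 ≤ M - x t₀),
        mul_nonneg hp.le (by linarith [hyM.2] : 0 ≤ M - y t₀),
        mul_nonneg hp.le (by linarith : 0 ≤ 2 * M - p), hp, hM0]
  -- conclude by letting ε → 0
  refine ⟨?_, ?_, ?_⟩
  · by_contra h
    push_neg at h
    have hε : 0 < -x T / Real.exp (3 * K * T) := div_pos (by linarith) (Real.exp_pos _)
    have h1 := (key _ hε T ⟨hT, le_refl _⟩).1
    rw [div_mul_cancel₀ _ (Real.exp_pos (3 * K * T)).ne'] at h1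
    linarith
  · by_contra h
    push_neg at h
    have hε : 0 < -y T / Real.exp (3 * K * T) := div_pos (by linarith) (Real.exp_pos _)
    have h1 := (key _ hε T ⟨hT, le_refl _⟩).2.1
    rw [div_mul_cancel₀ _ (Real.exp_pos (3 * K * T)).ne'] at h1
    linarith
  · by_contra h
    push_neg at h
    have hε : 0 < (x T + y T - 1) / Real.exp (3 * K * T) := div_pos (by linarith) (Real.exp_pos _)
    have h1 := (key _ hε T ⟨hT, le_refl _⟩).2.2
    rw [div_mul_cancel₀ _ (Real.exp_pos (3 * K * T)).ne'] at h1
    linarith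
end

section
/- Let z : [0, ∞) → ℝ be a differentiable function satisfying z'(t) = (1/2)·(1 − 4·z(t) − z(t)²) for all t ≥ 0, with z(0) ∈ [0, 1]. Then z(t) converges to z* = −2 + √5 as t → ∞. -/
open Set Filter Real Topology

/-- Barrier lemma: the solution cannot cross level `c` upwards if the
vector field is negative at `c`. -/
lemma no_cross_up (f z : ℝ → ℝ)
    (hz : ∀ t, 0 ≤ t → HasDerivAt z (f (z t)) t)
    (c : ℝ) (hc : f c < 0) (h0 : z 0 ≤ c) :
    ∀ t, 0 ≤ t → z t ≤ c := by
  intro t ht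
  by_contra hlt
  push_neg at hlt
  set S : Set ℝ := {t | 0 ≤ t ∧ c < z t} with hSdef
  have hne : S.Nonempty := ⟨t, ht, hlt⟩
  have hbd : BddBelow S := ⟨0, fun x hx => hx.1⟩
  set s := sInf S with hs
  have hs0 : 0 ≤ s := le_csInf hne fun x hx => hx.1
  have hcontz : ContinuousAt z s := (hz s hs0).continuousAt
  have hge : c ≤ z s := by
    obtain ⟨u, hu, hut⟩ := mem_closure_iff_seq_limit.1 (csInf_mem_closure hne hbd)
    have htend : Tendsto (z ∘ u) atTop (𝓝 (z s)) := hcontz.tendsto.comp hut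
    exact ge_of_tendsto htend (Eventually.of_forall fun n => (hu n).2.le)
  have hle : z s ≤ c := by
    rcases eq_or_lt_of_le hs0 with h | h
    · exact h ▸ h0
    · have hIoo : Ioo (0:ℝ) s ∈ 𝓝[<] s := Ioo_mem_nhdsLT_of_mem ⟨h, le_rfl⟩
      have hev : ∀ᶠ x in 𝓝[<] s, z x ≤ c := by
        filter_upwards [hIoo] with x hx
        by_contra hx'
        push_neg at hx'
        exact absurd (csInf_le hbd ⟨hx.1.le, hx'⟩) (not_le.2 hx.2)
      exact le_of_tendsto (hcontz.continuousWithinAt) hev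
  have hzs : z s = c := le_antisymm hle hge
  have hd : HasDerivAt z (f c) s := hzs ▸ hz s hs0
  have hslope : ∀ᶠ x in 𝓝[≠] s, slope z s x < 0 :=
    (hasDerivAt_iff_tendsto_slope.1 hd).eventually_lt_const hc
  have hslope' : ∀ᶠ x in 𝓝[>] s, slope z s x < 0 :=
    hslope.filter_mono (nhdsWithin_mono s fun x hx => ne_of_gt hx)
  have hev' : ∀ᶠ x in 𝓝[>] s, z x < c := by
    filter_upwards [hslope', self_mem_nhdsWithin] with x hx1 hx2
    have hxs : (0:ℝ) < x - s := sub_pos.2 hx2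
    have h2 : z x - z s < 0 := by
      have := mul_neg_of_neg_of_pos hx1 hxs
      rwa [slope_def_field, div_mul_cancel₀ _ (ne_of_gt hxs)] at this
    linarith [hzs ▸ h2]
  obtain ⟨u, hu, hsub⟩ := mem_nhdsGT_iff_exists_Ioo_subset.1 hev'
  obtain ⟨x, hxS, hxu⟩ := exists_lt_of_csInf_lt hne (show sInf S < u from hu)
  have hxs : s < x := by
    rcases eq_or_lt_of_le (csInf_le hbd hxS) with h | h
    · exact absurd (h ▸ hxS).2 (by rw [hzs]; exact lt_irrefl c)
    · exact h
  exact absurd hxS.2 (not_lt.2 (hsub ⟨hxs, hxu⟩).le)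

/-- For the ODE `z' = (1/2)(1 − 4z − z²)` with `z(0) ∈ [0,1]`,
`z(t) → z* = −2 + √5` as `t → ∞`. -/
theorem z_tendsto_fixed_point (z : ℝ → ℝ)
    (hz : ∀ t : ℝ, 0 ≤ t →
      HasDerivAt z ((1 / 2) * (1 - 4 * z t - (z t) ^ 2)) t)
    (hz0 : z 0 ∈ Set.Icc (0:ℝ) 1) :
    Filter.Tendsto z Filter.atTop (nhds (-2 + Real.sqrt 5)) := by
  set r := Real.sqrt 5 with hr
  have hr2 : r ^ 2 = 5 := Real.sq_sqrt (by norm_num)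
  have hr_ge : (2:ℝ) ≤ r := by
    nlinarith [Real.sqrt_nonneg 5]
  set c : ℝ := -2 + r with hc
  -- invariance: z stays in [0,1]
  have hub : ∀ t, 0 ≤ t → z t ≤ 1 := by
    refine no_cross_up (fun a => (1/2) * (1 - 4*a - a^2)) z hz 1 (by norm_num) hz0.2
  have hlb : ∀ t, 0 ≤ t → 0 ≤ z t := by
    have hy : ∀ t, 0 ≤ t →
        HasDerivAt (fun t => -z t) ((fun b => -((1/2) * (1 - 4*(-b) - (-b)^2))) (-z t)) t := by
      intro t ht
      refine HasDerivAt.congr_deriv (hz t ht).neg ?_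
      ring
    have := no_cross_up (fun b => -((1/2) * (1 - 4*(-b) - (-b)^2))) (fun t => -z t)
      hy 0 (by norm_num) (by simpa using hz0.1)
    intro t ht
    simpa using this t ht
  -- Lyapunov function
  set w : ℝ → ℝ := fun t => (z t - c)^2 with hw
  have hwderiv : ∀ t, 0 ≤ t → HasDerivAt w (-(z t + 2 + r) * w t) t := by
    intro t ht
    have h1 : HasDerivAt (fun t => z t - c)
        ((1 / 2) * (1 - 4 * z t - (z t) ^ 2)) t := (hz t ht).sub_const c
    have h2 : HasDerivAt (fun t => (z t - c) ^ 2) _ t := h1.pow 2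
    convert h2 using 1
    simp only [hc]
    push_cast
    linear_combination (z t + 2 - r) * hr2
  set g : ℝ → ℝ := fun t => w t * Real.exp (4 * t) with hg
  have hgderiv : ∀ t, 0 ≤ t →
      HasDerivAt g (-(z t + 2 + r) * w t * Real.exp (4*t) + w t * (Real.exp (4*t) * 4)) t := by
    intro t ht
    have he : HasDerivAt (fun t : ℝ => Real.exp (4 * t)) (Real.exp (4*t) * 4) t := by
      simpa using ((hasDerivAt_id t).const_mul (4:ℝ)).exp
    exact (hwderiv t ht).mul he
  have hganti : AntitoneOn g (Ici 0) := by
    apply antitoneOn_of_deriv_nonpos (convex_Ici 0)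
    · exact fun x hx => ((hgderiv x hx).continuousAt).continuousWithinAt
    · intro x hx
      rw [interior_Ici] at hx
      exact ((hgderiv x hx.le).differentiableAt).differentiableWithinAt
    · intro x hx
      rw [interior_Ici] at hx
      rw [(hgderiv x hx.le).deriv]
      have h1 : 0 ≤ w x := sq_nonneg _
      have h2 : 4 ≤ z x + 2 + r := by
        have := hlb x hx.le; linarith
      have h3 : (0:ℝ) < Real.exp (4*x) := Real.exp_pos _
      have heq : -(z x + 2 + r) * w x * Real.exp (4*x) + w x * (Real.exp (4*x) * 4)
          = (4 - (z x + 2 + r)) * (w x * Real.exp (4*x)) := by ring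
      rw [heq]
      exact mul_nonpos_of_nonpos_of_nonneg (by linarith) (mul_nonneg h1 h3.le)
  have hwbound : ∀ t, 0 ≤ t → w t ≤ w 0 * Real.exp (-(4*t)) := by
    intro t ht
    have h := hganti (self_mem_Ici) ht ht
    simp only [hg] at h
    rw [mul_zero, Real.exp_zero, mul_one] at h
    calc w t = w t * Real.exp (4*t) * Real.exp (-(4*t)) := by
          rw [mul_assoc, ← Real.exp_add]; simp
      _ ≤ w 0 * Real.exp (-(4*t)) :=
          mul_le_mul_of_nonneg_right h (Real.exp_pos _).le
  have hwtend : Tendsto w atTop (𝓝 0) := by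
    apply squeeze_zero' (Eventually.of_forall fun t => sq_nonneg _)
    · filter_upwards [eventually_ge_atTop (0:ℝ)] with t ht
      exact hwbound t ht
    · have h1 : Tendsto (fun t : ℝ => 4 * t) atTop atTop :=
        tendsto_id.const_mul_atTop (by norm_num : (0:ℝ) < 4)
      have h2 : Tendsto (fun t : ℝ => Real.exp (-(4*t))) atTop (𝓝 0) :=
        Real.tendsto_exp_neg_atTop_nhds_zero.comp h1
      simpa using h2.const_mul (w 0)
  have habs : Tendsto (fun t => |z t - c|) atTop (𝓝 0) := by
    have := (Real.continuous_sqrt.tendsto 0).comp hwtend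
    rw [Real.sqrt_zero] at this
    convert this using 2 with t
    simp [hw, Function.comp, Real.sqrt_sq_eq_abs]
  have hsub : Tendsto (fun t => z t - c) atTop (𝓝 0) :=
    (tendsto_zero_iff_abs_tendsto_zero _).2 habs
  have := hsub.add_const c
  simpa using this
end

section
/- Let u, z : [0, ∞) → ℝ be differentiable functions satisfying, for all t ≥ 0, u'(t) = u(t)·z(t) and z'(t) = (1/2)·(1 − u(t)² − 4·z(t) − z(t)²), with initial conditions u(0) ∈ (0, 1], z(0) ≥ 0, and u(0) + z(0) ≤ 1. Then for all t ≥ 0 one has u(t) ∈ (0, 1], z(t) ≥ 0 and u(t) + z(t) ≤ 1; the function u is nondecreasing; and u(t) → 1 as t → ∞. -/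
open Set Filter Real

private lemma monoIci {f g : ℝ → ℝ} {a : ℝ}
    (hf : ∀ t, a ≤ t → HasDerivAt f (g t) t)
    (hg : ∀ t, a ≤ t → 0 ≤ g t) : MonotoneOn f (Set.Ici a) := by
  apply monotoneOn_of_deriv_nonneg (convex_Ici a)
  · exact fun t ht => (hf t ht).continuousAt.continuousWithinAt
  · intro t ht
    rw [interior_Ici] at ht
    exact ((hf t (le_of_lt ht)).differentiableAt).differentiableWithinAt
  · intro t ht
    rw [interior_Ici] at ht
    rw [(hf t ht.le).deriv]
    exact hg t ht.le

private lemma deriv_nonpos_left {f : ℝ → ℝ} {d t₁ : ℝ} (hf : HasDerivAt f d t₁) (ht : 0 < t₁)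
    (hmin : ∀ s, 0 ≤ s → s < t₁ → f t₁ ≤ f s) : d ≤ 0 := by
  have h1 : Tendsto (slope f t₁) (nhdsWithin t₁ (Iio t₁)) (nhds d) := by
    have h2 := (hf.hasDerivWithinAt (s := Set.Iio t₁))
    rw [hasDerivWithinAt_iff_tendsto_slope] at h2
    simpa [Set.diff_singleton_eq_self (fun h => lt_irrefl t₁ h)] using h2
  refine le_of_tendsto h1 ?_
  filter_upwards [Ioo_mem_nhdsLT_of_mem (Set.mem_Ioc.mpr ⟨ht, le_refl t₁⟩)] with s hs
  rw [slope_def_field]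
  apply div_nonpos_iff.2
  left
  exact ⟨sub_nonneg.2 (hmin s hs.1.le hs.2), by linarith [hs.2]⟩

private lemma u_pos_aux {u z : ℝ → ℝ}
    (hu : ∀ t : ℝ, 0 ≤ t → HasDerivAt u (u t * z t) t)
    (hz : ∀ t : ℝ, 0 ≤ t →
      HasDerivAt z ((1 / 2) * (1 - (u t) ^ 2 - 4 * z t - (z t) ^ 2)) t)
    (hu0 : 0 < u 0) : ∀ t : ℝ, 0 ≤ t → 0 < u t := by
  intro T hT
  have hcontz : ContinuousOn z (Icc 0 T) := fun s hs =>
    ((hz s hs.1).continuousAt).continuousWithinAt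
  obtain ⟨M, hM⟩ := isCompact_Icc.exists_bound_of_continuousOn hcontz
  have hcontu : ContinuousOn u (Icc 0 T) := fun s hs =>
    ((hu s hs.1).continuousAt).continuousWithinAt
  have hnz : ∀ t₁ ∈ Set.Icc (0:ℝ) T, u t₁ ≠ 0 := by
    intro t₁ ht₁ h0
    have hsub : ∀ s ∈ Set.Icc (0:ℝ) t₁, (0:ℝ) ≤ t₁ - s ∧ t₁ - s ≤ T := by
      intro s hs
      exact ⟨by linarith [hs.2], by linarith [hs.1, ht₁.2]⟩
    set f : ℝ → ℝ := fun s => u (t₁ - s) with hfdef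
    have hder : ∀ s ∈ Set.Icc (0:ℝ) t₁,
        HasDerivAt f (-(u (t₁ - s) * z (t₁ - s))) s := by
      intro s hs
      have h1 : HasDerivAt (fun x : ℝ => t₁ - x) (-1) s := by
        simpa using (hasDerivAt_id s).const_sub t₁
      have h2 := (hu (t₁ - s) (hsub s hs).1).comp s h1
      simpa [hfdef, Function.comp_def] using h2
    have hcf : ContinuousOn f (Icc 0 t₁) := fun s hs =>
      ((hder s hs).continuousAt).continuousWithinAt
    have key := norm_le_gronwallBound_of_norm_deriv_right_le (δ := 0) (K := M) (ε := 0)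
      (f := f) (f' := fun s => -(u (t₁ - s) * z (t₁ - s))) (a := 0) (b := t₁)
      hcf
      (fun s hs => (hder s ⟨hs.1, hs.2.le⟩).hasDerivWithinAt)
      (by simp [hfdef, h0])
      (by
        intro s hs
        have hb := hM (t₁ - s) ⟨(hsub s ⟨hs.1, hs.2.le⟩).1, (hsub s ⟨hs.1, hs.2.le⟩).2⟩
        have h3 : ‖f s‖ = ‖u (t₁ - s)‖ := rfl
        rw [norm_neg, norm_mul, h3, add_zero, mul_comm (M) _]
        exact mul_le_mul_of_nonneg_left hb (norm_nonneg _))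
    have hfin := key t₁ (Set.mem_Icc.mpr ⟨ht₁.1, le_refl t₁⟩)
    rw [gronwallBound_ε0_δ0] at hfin
    have : u 0 = 0 := by
      have : ‖u 0‖ ≤ 0 := by simpa [hfdef] using hfin
      simpa using le_antisymm this (norm_nonneg _)
    linarith
  by_contra hle
  push_neg at hle
  have h0 : (0:ℝ) ∈ Icc (u T) (u 0) := ⟨hle, hu0.le⟩
  obtain ⟨s, hs, hs0⟩ := intermediate_value_Icc' hT hcontu h0
  exact hnz s hs hs0


private lemma inv_aux {u z : ℝ → ℝ}
    (hu : ∀ t : ℝ, 0 ≤ t → HasDerivAt u (u t * z t) t)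
    (hz : ∀ t : ℝ, 0 ≤ t →
      HasDerivAt z ((1 / 2) * (1 - (u t) ^ 2 - 4 * z t - (z t) ^ 2)) t)
    (hu0 : 0 < u 0) (hz0 : 0 ≤ z 0) (hsum0 : u 0 + z 0 ≤ 1) :
    ∀ t : ℝ, 0 ≤ t → 0 ≤ z t ∧ u t + z t ≤ 1 := by
  have hup := u_pos_aux hu hz hu0
  intro T hT
  -- bounds on |u| and |z| on [0,T]
  have hcontz : ContinuousOn z (Icc 0 T) := fun s hs =>
    ((hz s hs.1).continuousAt).continuousWithinAt
  have hcontu : ContinuousOn u (Icc 0 T) := fun s hs =>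
    ((hu s hs.1).continuousAt).continuousWithinAt
  obtain ⟨M₁, hM₁⟩ := isCompact_Icc.exists_bound_of_continuousOn hcontz
  obtain ⟨M₂, hM₂⟩ := isCompact_Icc.exists_bound_of_continuousOn hcontu
  set M : ℝ := max 1 (max M₁ M₂) with hMdef
  have hM1 : (1:ℝ) ≤ M := le_max_left _ _
  have hMz : ∀ s ∈ Icc (0:ℝ) T, |z s| ≤ M := fun s hs =>
    le_trans (hM₁ s hs) (le_trans (le_max_left _ _) (le_max_right _ _))
  have hMu : ∀ s ∈ Icc (0:ℝ) T, |u s| ≤ M := fun s hs =>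
    le_trans (hM₂ s hs) (le_trans (le_max_right _ _) (le_max_right _ _))
  set K : ℝ := 10 * M + 10 with hKdef
  -- the perturbed functions stay positive
  have key : ∀ ε : ℝ, 0 < ε → ∀ t ∈ Icc (0:ℝ) T,
      0 < z t + ε * exp (K * t) ∧ 0 < 1 - u t - z t + ε * exp (K * t) := by
    intro ε hε
    by_contra hcon
    push_neg at hcon
    obtain ⟨t₂, ht₂, hbad⟩ := hcon
    set F : ℝ → ℝ := fun t => z t + ε * exp (K * t) with hFdef
    set G : ℝ → ℝ := fun t => 1 - u t - z t + ε * exp (K * t) with hGdef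
    have hcontexp : ContinuousOn (fun t : ℝ => ε * exp (K * t)) (Icc 0 T) :=
      (continuous_const.mul (Real.continuous_exp.comp
        (continuous_const.mul continuous_id))).continuousOn
    have hcontF : ContinuousOn F (Icc 0 T) := hcontz.add hcontexp
    have hcontG : ContinuousOn G (Icc 0 T) :=
      ((continuousOn_const.sub hcontu).sub hcontz).add hcontexp
    set B : Set ℝ := (Icc 0 T ∩ F ⁻¹' Iic 0) ∪ (Icc 0 T ∩ G ⁻¹' Iic 0) with hBdef
    have hmemB : ∀ s, s ∈ B ↔ (s ∈ Icc (0:ℝ) T ∧ (F s ≤ 0 ∨ G s ≤ 0)) := by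
      intro s
      simp only [hBdef, Set.mem_union, Set.mem_inter_iff, Set.mem_preimage, Set.mem_Iic]
      tauto
    have hBne : B.Nonempty := by
      refine ⟨t₂, (hmemB t₂).mpr ⟨ht₂, ?_⟩⟩
      rcases le_or_gt (F t₂) 0 with h | h
      · exact Or.inl h
      · exact Or.inr (hbad h)
    have hBclosed : IsClosed B :=
      IsClosed.union
        (hcontF.preimage_isClosed_of_isClosed isClosed_Icc isClosed_Iic)
        (hcontG.preimage_isClosed_of_isClosed isClosed_Icc isClosed_Iic)
    have hBcompact : IsCompact B :=
      isCompact_Icc.of_isClosed_subset hBclosed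
        (fun t ht => ((hmemB t).mp ht).1)
    obtain ⟨t₁, ht₁B, ht₁least⟩ := hBcompact.exists_isLeast hBne
    obtain ⟨ht₁Icc, ht₁or⟩ := (hmemB t₁).mp ht₁B
    have h0notB : (0:ℝ) ∉ B := by
      intro h0
      have h1 : 0 < F 0 := by
        simp only [hFdef, mul_zero, Real.exp_zero, mul_one]
        linarith
      have h2 : 0 < G 0 := by
        simp only [hGdef, mul_zero, Real.exp_zero, mul_one]
        linarith
      rcases ((hmemB 0).mp h0).2 with h | h <;> linarith
    have ht₁pos : 0 < t₁ := lt_of_le_of_ne ht₁Icc.1 (fun h => h0notB (h ▸ ht₁B))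
    have hbefore : ∀ s, 0 ≤ s → s < t₁ → 0 < F s ∧ 0 < G s := by
      intro s hs0 hst
      have hsIcc : s ∈ Icc (0:ℝ) T := ⟨hs0, le_trans hst.le ht₁Icc.2⟩
      by_contra hc
      push_neg at hc
      have hsB : s ∈ B := by
        refine (hmemB s).mpr ⟨hsIcc, ?_⟩
        rcases lt_or_ge 0 (F s) with h | h
        · exact Or.inr (hc h)
        · exact Or.inl h
      exact absurd (ht₁least hsB) (not_le.mpr hst)
    have hIooSub : Ioo (0:ℝ) t₁ ⊆ Icc 0 T :=
      fun s hs => ⟨hs.1.le, le_trans hs.2.le ht₁Icc.2⟩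
    haveI : (nhdsWithin t₁ (Ioo (0:ℝ) t₁)).NeBot := right_nhdsWithin_Ioo_neBot ht₁pos
    -- at t₁ both are ≥ 0 by left continuity
    have hleftF : 0 ≤ F t₁ := by
      refine ge_of_tendsto ((hcontF t₁ ht₁Icc).mono hIooSub) ?_
      filter_upwards [self_mem_nhdsWithin] with s hs
      exact (hbefore s hs.1.le hs.2).1.le
    have hleftG : 0 ≤ G t₁ := by
      refine ge_of_tendsto ((hcontG t₁ ht₁Icc).mono hIooSub) ?_
      filter_upwards [self_mem_nhdsWithin] with s hs
      exact (hbefore s hs.1.le hs.2).2.le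
    -- derivative of the perturbation
    have hexpder : HasDerivAt (fun t : ℝ => ε * exp (K * t)) (ε * (exp (K * t₁) * K)) t₁ := by
      have h1 : HasDerivAt (fun t : ℝ => K * t) K t₁ := by
        simpa using (hasDerivAt_id t₁).const_mul K
      exact ((Real.hasDerivAt_exp (K * t₁)).comp t₁ h1).const_mul ε
    set δ : ℝ := ε * exp (K * t₁) with hδdef
    have hδpos : 0 < δ := mul_pos hε (exp_pos _)
    have huM : |u t₁| ≤ M := hMu t₁ ht₁Icc
    have hzM : |z t₁| ≤ M := hMz t₁ ht₁Icc
    have hupos : 0 < u t₁ := hup t₁ ht₁Icc.1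
    rcases ht₁or with hF0 | hG0
    · -- z t₁ = -δ
      have hzeq : z t₁ = -δ := by
        have : F t₁ = 0 := le_antisymm hF0 hleftF
        simp only [hFdef] at this
        linarith [this]
      have hAge : -δ ≤ 1 - u t₁ - z t₁ := by
        have := hleftG
        simp only [hGdef] at this
        linarith
      have hFder : HasDerivAt F
          ((1 / 2) * (1 - (u t₁) ^ 2 - 4 * z t₁ - (z t₁) ^ 2) + ε * (exp (K * t₁) * K)) t₁ :=
        (hz t₁ ht₁Icc.1).add hexpder
      have hdle : (1 / 2) * (1 - (u t₁) ^ 2 - 4 * z t₁ - (z t₁) ^ 2)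
          + ε * (exp (K * t₁) * K) ≤ 0 := by
        refine deriv_nonpos_left hFder ht₁pos ?_
        intro s hs0 hst
        have h1 := (hbefore s hs0 hst).1
        have h2 : F t₁ = 0 := le_antisymm hF0 hleftF
        linarith
      have hδM : δ ≤ M := by
        rw [hzeq] at hzM
        rwa [abs_neg, abs_of_pos hδpos] at hzM
      have hεK : ε * (exp (K * t₁) * K) = K * δ := by
        rw [hδdef]; ring
      rw [hεK, hzeq] at hdle
      have hule : u t₁ ≤ 1 + 2 * δ := by linarith
      nlinarith [mul_nonneg (show (0:ℝ) ≤ 1 + 2 * δ - u t₁ by linarith)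
          (show (0:ℝ) ≤ 1 + u t₁ by linarith),
        mul_nonneg hδpos.le (show (0:ℝ) ≤ 1 + 2 * δ - u t₁ by linarith),
        mul_nonneg hδpos.le (show (0:ℝ) ≤ M - δ by linarith)]
    · -- 1 - u t₁ - z t₁ = -δ
      have hAeq : u t₁ = 1 - z t₁ + δ := by
        have : G t₁ = 0 := le_antisymm hG0 hleftG
        simp only [hGdef] at this
        linarith
      have hzge : -δ ≤ z t₁ := by
        have := hleftF
        simp only [hFdef] at this
        linarith
      have hGder : HasDerivAt G
          ((0 - u t₁ * z t₁ - (1 / 2) * (1 - (u t₁) ^ 2 - 4 * z t₁ - (z t₁) ^ 2))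
            + ε * (exp (K * t₁) * K)) t₁ :=
        (((hasDerivAt_const t₁ (1:ℝ)).sub (hu t₁ ht₁Icc.1)).sub (hz t₁ ht₁Icc.1)).add hexpder
      have hdle : (0 - u t₁ * z t₁ - (1 / 2) * (1 - (u t₁) ^ 2 - 4 * z t₁ - (z t₁) ^ 2))
            + ε * (exp (K * t₁) * K) ≤ 0 := by
        refine deriv_nonpos_left hGder ht₁pos ?_
        intro s hs0 hst
        have h1 := (hbefore s hs0 hst).2
        have h2 : G t₁ = 0 := le_antisymm hG0 hleftG
        linarith
      have hεK : ε * (exp (K * t₁) * K) = K * δ := by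
        rw [hδdef]; ring
      rw [hεK, hAeq] at hdle
      have hKpos : 0 < K := by rw [hKdef]; linarith
      nlinarith [sq_nonneg (z t₁ - δ / 2), mul_pos hKpos hδpos]
  -- let ε → 0
  set t : ℝ := T with htdef
  have ht : t ∈ Icc (0:ℝ) T := ⟨hT, le_refl T⟩
  have hexppos : 0 < exp (K * t) := exp_pos _
  constructor
  · by_contra hc
    push_neg at hc
    have hεpos : 0 < -z t / (2 * exp (K * t)) := div_pos (by linarith) (by positivity)
    have h1 := (key _ hεpos t ht).1
    have h2 : -z t / (2 * exp (K * t)) * exp (K * t) = -z t / 2 := by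
      field_simp
    rw [h2] at h1
    linarith
  · by_contra hc
    push_neg at hc
    have hApos : 0 < u t + z t - 1 := by linarith
    have hεpos : 0 < (u t + z t - 1) / (2 * exp (K * t)) := by positivity
    have h1 := (key _ hεpos t ht).2
    have h2 : (u t + z t - 1) / (2 * exp (K * t)) * exp (K * t) = (u t + z t - 1) / 2 := by
      field_simp
    rw [h2] at h1
    linarith


/-- For the mean-field system `u' = uz`, `z' = (1/2)(1 − u² − 4z − z²)` with
`u(0) ∈ (0,1]`, `z(0) ≥ 0`, `u(0) + z(0) ≤ 1`: the region is invariant, `u` is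
nondecreasing on `[0,∞)`, and `u(t) → 1` as `t → ∞`. -/
theorem consensus_ode (u z : ℝ → ℝ)
    (hu : ∀ t : ℝ, 0 ≤ t → HasDerivAt u (u t * z t) t)
    (hz : ∀ t : ℝ, 0 ≤ t →
      HasDerivAt z ((1 / 2) * (1 - (u t) ^ 2 - 4 * z t - (z t) ^ 2)) t)
    (hu0 : u 0 ∈ Set.Ioc (0:ℝ) 1) (hz0 : 0 ≤ z 0) (hsum0 : u 0 + z 0 ≤ 1) :
    (∀ t : ℝ, 0 ≤ t → u t ∈ Set.Ioc (0:ℝ) 1 ∧ 0 ≤ z t ∧ u t + z t ≤ 1) ∧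
    MonotoneOn u (Set.Ici 0) ∧
    Filter.Tendsto u Filter.atTop (nhds 1) := by
  have hup := u_pos_aux hu hz hu0.1
  have hinv := inv_aux hu hz hu0.1 hz0 hsum0
  have hreg : ∀ t : ℝ, 0 ≤ t → u t ∈ Set.Ioc (0:ℝ) 1 ∧ 0 ≤ z t ∧ u t + z t ≤ 1 := by
    intro t ht
    obtain ⟨h1, h2⟩ := hinv t ht
    exact ⟨⟨hup t ht, by linarith⟩, h1, h2⟩
  have hmono : MonotoneOn u (Set.Ici 0) :=
    monoIci hu (fun t ht => mul_nonneg (hup t ht).le (hinv t ht).1)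
  refine ⟨hreg, hmono, ?_⟩
  -- the supremum of u on [0, ∞)
  have hbdd : BddAbove (u '' Set.Ici 0) := by
    refine ⟨1, ?_⟩
    rintro x ⟨t, ht, rfl⟩
    exact (hreg t ht).1.2
  have hne : (u '' Set.Ici 0).Nonempty := ⟨u 0, 0, Set.mem_Ici.mpr (le_refl 0), rfl⟩
  set L : ℝ := sSup (u '' Set.Ici 0) with hLdef
  have huL : ∀ t : ℝ, 0 ≤ t → u t ≤ L := fun t ht => le_csSup hbdd ⟨t, ht, rfl⟩
  have hL1 : L ≤ 1 := by
    apply csSup_le hne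
    rintro x ⟨t, ht, rfl⟩
    exact (hreg t ht).1.2
  have hL0 : 0 < L := lt_of_lt_of_le hu0.1 (huL 0 (le_refl 0))
  have hLeq : L = 1 := by
    by_contra hne1
    have hLlt : L < 1 := lt_of_le_of_ne hL1 hne1
    set c : ℝ := (1 - L ^ 2) / 2 with hcdef
    have hc : 0 < c := by nlinarith
    -- comparison function for z
    have hφ : MonotoneOn (fun t => exp ((5/2) * t) * (z t - (2/5) * c)) (Set.Ici 0) := by
      apply monoIci (g := fun t => exp ((5/2) * t) * (5/2) * (z t - (2/5) * c)
          + exp ((5/2) * t) * ((1 / 2) * (1 - (u t) ^ 2 - 4 * z t - (z t) ^ 2)))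
      · intro t ht
        have h1 : HasDerivAt (fun t : ℝ => (5/2) * t) (5/2) t := by
          simpa using (hasDerivAt_id t).const_mul (5/2 : ℝ)
        have h2 : HasDerivAt (fun t : ℝ => exp ((5/2) * t)) (exp ((5/2) * t) * (5/2)) t :=
          (Real.hasDerivAt_exp ((5/2) * t)).comp t h1
        exact h2.mul ((hz t ht).sub_const ((2/5) * c))
      · intro t ht
        have h1 : 0 < u t := hup t ht
        have h2 : u t ≤ L := huL t ht
        have h3 : 0 ≤ z t := (hinv t ht).1
        have h4 : z t ≤ 1 := by linarith [(hinv t ht).2]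
        have h5 : 0 ≤ (5/2) * (z t - (2/5) * c)
            + (1 / 2) * (1 - (u t) ^ 2 - 4 * z t - (z t) ^ 2) := by
          nlinarith [mul_nonneg h3 (sub_nonneg.mpr h4),
            mul_nonneg (sub_nonneg.mpr h2) (show (0:ℝ) ≤ L + u t by linarith)]
        have h6 : exp ((5/2) * t) * (5/2) * (z t - (2/5) * c)
            + exp ((5/2) * t) * ((1 / 2) * (1 - (u t) ^ 2 - 4 * z t - (z t) ^ 2))
            = exp ((5/2) * t) * ((5/2) * (z t - (2/5) * c)
              + (1 / 2) * (1 - (u t) ^ 2 - 4 * z t - (z t) ^ 2)) := by ring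
        rw [h6]
        exact mul_nonneg (exp_pos _).le h5
    -- lower bound for z for t ≥ 1
    have hzlb : ∀ t : ℝ, 1 ≤ t → c / 5 ≤ z t := by
      intro t ht
      have h0t : (0:ℝ) ≤ t := by linarith
      have hm := hφ (Set.mem_Ici.mpr (le_refl 0)) (Set.mem_Ici.mpr h0t) h0t
      simp only [mul_zero, Real.exp_zero, one_mul] at hm
      have hE : (2:ℝ) ≤ exp ((5/2) * t) := by
        have : (2:ℝ) ≤ exp 1 := by
          have := Real.add_one_le_exp (1:ℝ)
          linarith
        refine le_trans this (Real.exp_le_exp.mpr ?_)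
        linarith
      have hm2 : -(2/5) * c ≤ exp ((5/2) * t) * (z t - (2/5) * c) := by
        have : -(2/5) * c ≤ z 0 - (2/5) * c := by linarith
        linarith [hm, this]
      rcases le_or_gt 0 (z t - (2/5) * c) with h | h
      · linarith
      · nlinarith [mul_nonneg (sub_nonneg.mpr hE) (show (0:ℝ) ≤ -(z t - (2/5) * c) by linarith)]
    set m : ℝ := u 0 * (c / 5) with hmdef
    have hm0 : 0 < m := mul_pos hu0.1 (by positivity)
    have hψ : MonotoneOn (fun t => u t - m * t) (Set.Ici 1) := by
      apply monoIci (g := fun t => u t * z t - m)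
      · intro t ht
        have h1 : HasDerivAt (fun t : ℝ => m * t) m t := by
          simpa using (hasDerivAt_id t).const_mul m
        exact (hu t (by linarith)).sub h1
      · intro t ht
        have h0t : (0:ℝ) ≤ t := by linarith
        have h1 : u 0 ≤ u t := hmono (Set.mem_Ici.mpr (le_refl 0)) (Set.mem_Ici.mpr h0t) h0t
        have h2 : c / 5 ≤ z t := hzlb t ht
        have h3 : m ≤ u t * z t := by
          rw [hmdef]
          exact mul_le_mul h1 h2 (by positivity) (by linarith [hup t h0t])
        linarith
    have ht₂ : (1:ℝ) ≤ 1 + 2 / m := by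
      have : 0 < 2 / m := by positivity
      linarith
    have hcomp := hψ (Set.mem_Ici.mpr (le_refl 1)) (Set.mem_Ici.mpr ht₂) ht₂
    simp only at hcomp
    have hmm : m * (1 + 2 / m) = m + 2 := by
      field_simp
    have hu1 : 0 < u 1 := hup 1 (by norm_num)
    have hub : u (1 + 2 / m) ≤ 1 := (hreg (1 + 2 / m) (by linarith)).1.2
    rw [hmm] at hcomp
    -- u (1 + 2/m) - (m + 2) ≥ u 1 - m, so u(1+2/m) ≥ u 1 + 2 > 1
    linarith
  rw [← hLeq]
  rw [Metric.tendsto_atTop]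
  intro ε hε
  obtain ⟨x, ⟨t₀, ht₀, rfl⟩, hx⟩ := exists_lt_of_lt_csSup hne (show L - ε < L by linarith)
  refine ⟨t₀, fun n hn => ?_⟩
  have ht₀' : (0:ℝ) ≤ t₀ := ht₀
  have hn0 : (0:ℝ) ≤ n := le_trans ht₀' hn
  have h1 : u t₀ ≤ u n := hmono (Set.mem_Ici.mpr ht₀') (Set.mem_Ici.mpr hn0) hn
  have h2 : u n ≤ L := huL n hn0
  rw [Real.dist_eq, abs_lt]
  constructor <;> linarith
end
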